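/- arXiv:1611.09965 — 6 statements merged into one kernel-verified Lean document; each statement's English description precedes it below -/
import Mathlib

section
/- Let Y be a separable metric space, κ > 0, and let ν₁, ν₂ be Borel measures on Y with ν₂ upper regular by open sets. Let 0 < s, t < ∞ and let A ⊆ Y be a set such that D^κν₁(y) ≤ s and D^κν₂(y) ≥ t for all y ∈ A. Then ν₁(A) ≤ 5^κ · s · t^{-1} · ν₂(A). -/
open scoped ENNReal NNReal
open MeasureTheory Metric Filter Set Topology

/-- A measure is upper regular by open sets if the measure of every set is the infimum of the
measures of open sets containing it. -/
def UpperRegular {Y : Type*} [TopologicalSpace Y] [MeasurableSpace Y] (η : Measure Y) : Prop :=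
  ∀ A : Set Y, η A = ⨅ (U : Set Y) (_ : IsOpen U) (_ : A ⊆ U), η U

/-- The lower `κ`-density of a measure at a point. -/
noncomputable def dens {Y : Type*} [PseudoMetricSpace Y] [MeasurableSpace Y] (κ : ℝ)
    (ν : Measure Y) (y : Y) : ℝ≥0∞ :=
  Filter.liminf (fun r : ℝ => ν (Metric.ball y r) / ENNReal.ofReal (r ^ κ)) (𝓝[>] 0)

lemma key_step {Y : Type*}
    [MetricSpace Y] [TopologicalSpace.SeparableSpace Y] [MeasurableSpace Y] [BorelSpace Y]
    (κ : ℝ) (hκ : 0 < κ) (ν₁ ν₂ : Measure Y) (hreg : UpperRegular ν₂)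
    (s t : ℝ) (hs : 0 < s) (ht : 0 < t) (A : Set Y)
    (h1 : ∀ y ∈ A, dens κ ν₁ y ≤ ENNReal.ofReal s)
    (h2 : ∀ y ∈ A, ENNReal.ofReal t ≤ dens κ ν₂ y)
    (hA : ν₂ A ≠ ∞) (s' t' ε : ℝ) (hss' : s < s') (ht'0 : 0 < t') (ht't : t' < t)
    (hε : 0 < ε) :
    ν₁ A ≤ ENNReal.ofReal (5 ^ κ * s' * t'⁻¹) * (ν₂ A + ENNReal.ofReal ε) := by
  classical
  -- choose an open set U ⊇ A with ν₂ U < ν₂ A + ε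
  have hlt : (⨅ (U : Set Y) (_ : IsOpen U) (_ : A ⊆ U), ν₂ U) < ν₂ A + ENNReal.ofReal ε := by
    rw [← hreg A]
    exact ENNReal.lt_add_right hA (by simp [hε])
  simp only [iInf_lt_iff] at hlt
  obtain ⟨U, hUopen, hAU, hUlt⟩ := hlt
  -- intermediate constant and scaling factor
  have hs'0 : 0 < s' := lt_trans hs hss'
  set s₁ := (s + s') / 2 with hs₁def
  have hs₁0 : 0 < s₁ := by rw [hs₁def]; positivity
  have hss₁ : s < s₁ := by simp only [hs₁def]; linarith
  have hs₁s' : s₁ < s' := by simp only [hs₁def]; linarith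
  set θ := (s₁ / s') ^ κ⁻¹ with hθdef
  have hθ0 : 0 < θ := Real.rpow_pos_of_pos (by positivity) _
  have hθ1 : θ < 1 :=
    Real.rpow_lt_one (by positivity) (by rw [div_lt_one hs'0]; exact hs₁s')
      (by positivity)
  have hθκ : θ ^ κ = s₁ / s' := by
    rw [hθdef, ← Real.rpow_mul (div_nonneg hs₁0.le hs'0.le), inv_mul_cancel₀ hκ.ne',
      Real.rpow_one]
  -- choose good radii
  have choice : ∀ y : Y, ∃ r : ℝ, y ∈ A → 0 < r ∧ r ≤ 1 ∧ closedBall y (5 * r) ⊆ U ∧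
      ν₁ (closedBall y (5 * r)) ≤ ENNReal.ofReal (s' * (5 * r) ^ κ) ∧
      ENNReal.ofReal (t' * r ^ κ) ≤ ν₂ (closedBall y r) := by
    intro y
    by_cases hy : y ∈ A
    swap
    · exact ⟨1, fun h => absurd h hy⟩
    obtain ⟨δ, hδ0, hδU⟩ := Metric.isOpen_iff.1 hUopen y (hAU hy)
    have hmap : Tendsto (fun ρ : ℝ => θ * ρ / 5) (𝓝[>] 0) (𝓝[>] 0) := by
      apply tendsto_nhdsWithin_of_tendsto_nhds_of_eventually_within
      · have h0 : Tendsto (fun ρ : ℝ => θ * ρ / 5) (𝓝 0) (𝓝 (θ * 0 / 5)) :=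
          ((continuous_const.mul continuous_id).div_const 5).tendsto 0
        simpa using h0.mono_left nhdsWithin_le_nhds
      · filter_upwards [self_mem_nhdsWithin] with ρ (hρ : 0 < ρ)
        exact mem_Ioi.2 (by positivity)
    have ev1 : ∀ᶠ ρ in 𝓝[>] (0 : ℝ),
        ENNReal.ofReal t' < ν₂ (ball y ρ) / ENNReal.ofReal (ρ ^ κ) := by
      apply Filter.eventually_lt_of_lt_liminf _
        (isBoundedUnder_of ⟨0, fun x => zero_le⟩)
      calc ENNReal.ofReal t' < ENNReal.ofReal t := by
            exact (ENNReal.ofReal_lt_ofReal_iff ht).2 ht't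
        _ ≤ _ := h2 y hy
    have ev1' := hmap.eventually ev1
    have ev2 : ∀ᶠ ρ in 𝓝[>] (0 : ℝ), ρ < δ :=
      eventually_nhdsWithin_of_eventually_nhds (eventually_lt_nhds hδ0)
    have ev3 : ∀ᶠ ρ in 𝓝[>] (0 : ℝ), ρ < 5 / θ :=
      eventually_nhdsWithin_of_eventually_nhds (eventually_lt_nhds (by positivity))
    have ev4 : ∀ᶠ ρ in 𝓝[>] (0 : ℝ), 0 < ρ := self_mem_nhdsWithin
    have freq : ∃ᶠ ρ in 𝓝[>] (0 : ℝ),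
        ν₁ (ball y ρ) / ENNReal.ofReal (ρ ^ κ) < ENNReal.ofReal s₁ :=
      Filter.frequently_lt_of_liminf_lt
        (IsBoundedUnder.isCoboundedUnder_ge ⟨⊤, Filter.Eventually.of_forall fun x => le_top⟩)
        (lt_of_le_of_lt (h1 y hy) ((ENNReal.ofReal_lt_ofReal_iff hs₁0).2 hss₁))
    obtain ⟨ρ, hfr, h2ρ, hρδ, hρ5θ, hρ0⟩ :=
      (freq.and_eventually (ev1'.and (ev2.and (ev3.and ev4)))).exists
    refine ⟨θ * ρ / 5, fun _ => ?_⟩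
    have hr0 : 0 < θ * ρ / 5 := by positivity
    have h5r : 5 * (θ * ρ / 5) = θ * ρ := by ring
    have hθρρ : θ * ρ < ρ := by nlinarith
    have hρκ0 : (0 : ℝ) < ρ ^ κ := Real.rpow_pos_of_pos hρ0 _
    refine ⟨hr0, ?_, ?_, ?_, ?_⟩
    · rw [div_le_one (by norm_num)]
      have : θ * ρ ≤ θ * (5 / θ) := by nlinarith
      calc θ * ρ ≤ θ * (5 / θ) := this
        _ = 5 := by field_simp
    · rw [h5r]
      exact (closedBall_subset_ball hθρρ).trans ((ball_subset_ball hρδ.le).trans hδU)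
    · rw [h5r]
      have hsub : closedBall y (θ * ρ) ⊆ ball y ρ := closedBall_subset_ball hθρρ
      have hball : ν₁ (ball y ρ) < ENNReal.ofReal s₁ * ENNReal.ofReal (ρ ^ κ) := by
        rwa [ENNReal.div_lt_iff (Or.inl (by simp [hρκ0])) (Or.inl ENNReal.ofReal_ne_top)]
          at hfr
      calc ν₁ (closedBall y (θ * ρ)) ≤ ν₁ (ball y ρ) := measure_mono hsub
        _ ≤ ENNReal.ofReal s₁ * ENNReal.ofReal (ρ ^ κ) := hball.le
        _ = ENNReal.ofReal (s₁ * ρ ^ κ) := (ENNReal.ofReal_mul hs₁0.le).symm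
        _ = ENNReal.ofReal (s' * (θ * ρ) ^ κ) := by
            congr 1
            rw [Real.mul_rpow hθ0.le hρ0.le, hθκ]
            field_simp
    · have hrκ0 : (0 : ℝ) < (θ * ρ / 5) ^ κ := Real.rpow_pos_of_pos hr0 _
      have h2ρ' : ENNReal.ofReal t' * ENNReal.ofReal ((θ * ρ / 5) ^ κ)
          < ν₂ (ball y (θ * ρ / 5)) := by
        rwa [ENNReal.lt_div_iff_mul_lt (Or.inl (by simp [hrκ0]))
          (Or.inl ENNReal.ofReal_ne_top)] at h2ρ
      calc ENNReal.ofReal (t' * (θ * ρ / 5) ^ κ)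
          = ENNReal.ofReal t' * ENNReal.ofReal ((θ * ρ / 5) ^ κ) :=
            ENNReal.ofReal_mul ht'0.le
        _ ≤ ν₂ (ball y (θ * ρ / 5)) := h2ρ'.le
        _ ≤ ν₂ (closedBall y (θ * ρ / 5)) := measure_mono ball_subset_closedBall
  choose R hR using choice
  -- Vitali covering
  obtain ⟨u, huA, hdisj, hcov⟩ :=
    Vitali.exists_disjoint_subfamily_covering_enlargement_closedBall A (fun y : Y => y) R 1
      (fun a ha => (hR a ha).2.1) 5 (by norm_num)
  have hcount : u.Countable := by
    apply Set.PairwiseDisjoint.countable_of_isOpen (s := fun a : Y => ball a (R a))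
    · exact hdisj.mono fun a => ball_subset_closedBall
    · intro a _; exact isOpen_ball
    · intro a ha; exact nonempty_ball.2 (hR a (huA ha)).1
  have hAcov : A ⊆ ⋃ b ∈ u, closedBall b (5 * R b) := by
    intro y hy
    obtain ⟨b, hbu, hsub⟩ := hcov y hy
    exact mem_biUnion hbu (hsub (mem_closedBall_self (hR y hy).1.le))
  calc ν₁ A ≤ ν₁ (⋃ b ∈ u, closedBall b (5 * R b)) := measure_mono hAcov
    _ ≤ ∑' b : u, ν₁ (closedBall b (5 * R b)) := measure_biUnion_le _ hcount _
    _ ≤ ∑' b : u, ENNReal.ofReal (5 ^ κ * s' * t'⁻¹) * ENNReal.ofReal (t' * (R b) ^ κ) := by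
        apply ENNReal.tsum_le_tsum
        rintro ⟨b, hbu⟩
        have hb := hR b (huA hbu)
        calc ν₁ (closedBall b (5 * R b)) ≤ ENNReal.ofReal (s' * (5 * R b) ^ κ) := hb.2.2.2.1
          _ = ENNReal.ofReal (5 ^ κ * s' * t'⁻¹) * ENNReal.ofReal (t' * (R b) ^ κ) := by
              rw [← ENNReal.ofReal_mul (by positivity)]
              congr 1
              rw [Real.mul_rpow (by norm_num) hb.1.le]
              field_simp
    _ = ENNReal.ofReal (5 ^ κ * s' * t'⁻¹) * ∑' b : u, ENNReal.ofReal (t' * (R b) ^ κ) :=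
        ENNReal.tsum_mul_left
    _ ≤ ENNReal.ofReal (5 ^ κ * s' * t'⁻¹) * ∑' b : u, ν₂ (closedBall b (R b)) := by
        gcongr with b
        exact (hR b (huA b.2)).2.2.2.2
    _ = ENNReal.ofReal (5 ^ κ * s' * t'⁻¹) * ν₂ (⋃ b ∈ u, closedBall b (R b)) := by
        rw [measure_biUnion hcount hdisj fun b _ => measurableSet_closedBall]
    _ ≤ ENNReal.ofReal (5 ^ κ * s' * t'⁻¹) * ν₂ U := by
        gcongr
        apply iUnion₂_subset
        intro b hbu
        have hb := hR b (huA hbu)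
        exact (closedBall_subset_closedBall (by nlinarith [hb.1])).trans hb.2.2.1
    _ ≤ _ := mul_le_mul_right hUlt.le _

theorem compare_measures_of_density {Y : Type*}
    [MetricSpace Y] [TopologicalSpace.SeparableSpace Y] [MeasurableSpace Y] [BorelSpace Y]
    (κ : ℝ) (hκ : 0 < κ) (ν₁ ν₂ : Measure Y) (hreg : UpperRegular ν₂)
    (s t : ℝ) (hs : 0 < s) (ht : 0 < t) (A : Set Y)
    (h1 : ∀ y ∈ A, dens κ ν₁ y ≤ ENNReal.ofReal s)
    (h2 : ∀ y ∈ A, ENNReal.ofReal t ≤ dens κ ν₂ y) :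
    ν₁ A ≤ ENNReal.ofReal (5 ^ κ * s * t⁻¹) * ν₂ A := by
  rcases eq_top_or_lt_top (ν₂ A) with hA | hA
  · rw [hA, ENNReal.mul_top (by simp only [ne_eq, ENNReal.ofReal_eq_zero, not_le]; positivity)]
    exact le_top
  have key : ∀ᶠ ε in 𝓝[>] (0 : ℝ),
      ν₁ A ≤ ENNReal.ofReal (5 ^ κ * s * t⁻¹ * (1 + ε) ^ 2) * (ν₂ A + ENNReal.ofReal ε) := by
    filter_upwards [self_mem_nhdsWithin] with ε (hε : 0 < ε)
    have h := key_step κ hκ ν₁ ν₂ hreg s t hs ht A h1 h2 hA.ne (s * (1 + ε)) (t / (1 + ε)) ε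
      (by nlinarith) (by positivity) (by rw [div_lt_iff₀ (by linarith)]; nlinarith) hε
    convert h using 3
    field_simp
  have c1 : Tendsto (fun ε : ℝ => ENNReal.ofReal (5 ^ κ * s * t⁻¹ * (1 + ε) ^ 2)) (𝓝[>] 0)
      (𝓝 (ENNReal.ofReal (5 ^ κ * s * t⁻¹))) := by
    have hcont : Tendsto (fun ε : ℝ => ENNReal.ofReal (5 ^ κ * s * t⁻¹ * (1 + ε) ^ 2)) (𝓝 0)
        (𝓝 (ENNReal.ofReal (5 ^ κ * s * t⁻¹ * (1 + 0) ^ 2))) := by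
      apply ENNReal.continuous_ofReal.continuousAt.tendsto.comp
      exact Continuous.tendsto (by continuity) 0
    simpa using hcont.mono_left nhdsWithin_le_nhds
  have c2 : Tendsto (fun ε : ℝ => ν₂ A + ENNReal.ofReal ε) (𝓝[>] 0) (𝓝 (ν₂ A)) := by
    have h0 : Tendsto (fun ε : ℝ => ENNReal.ofReal ε) (𝓝 0) (𝓝 (ENNReal.ofReal 0)) :=
      ENNReal.continuous_ofReal.continuousAt.tendsto
    have := (tendsto_const_nhds (x := ν₂ A) (f := 𝓝[>] (0:ℝ))).add
      (h0.mono_left nhdsWithin_le_nhds)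
    simpa using this
  have htend := ENNReal.Tendsto.mul c1 (Or.inr hA.ne) c2 (Or.inr ENNReal.ofReal_ne_top)
  exact ge_of_tendsto htend key
end

section
/- Let Y be a separable metric space, κ > 0, and let ν and η be Borel measures on Y with η upper regular by open sets, such that D^κν(y) < ∞ for ν-almost every y ∈ Y. If D^κη(y) > 0 for all y ∈ Y, then ν is absolutely continuous with respect to η. -/
open scoped ENNReal NNReal
open MeasureTheory Metric Filter Set Topology

lemma key_density_lemma {Y : Type*}
    [MetricSpace Y] [TopologicalSpace.SeparableSpace Y] [MeasurableSpace Y] [BorelSpace Y]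
    (κ : ℝ) (hκ : 0 < κ) (ν η : Measure Y) (hreg : UpperRegular η)
    (M δ : ℝ≥0∞) (hM : M ≠ ⊤) (hδ : 0 < δ) (hδt : δ ≠ ⊤)
    (A : Set Y) (hA : ∀ y ∈ A, dens κ ν y < M ∧ δ < dens κ η y)
    (hηA : η A = 0) : ν A = 0 := by
  set C : ℝ≥0∞ := M * ENNReal.ofReal (6 ^ κ) / δ with hC
  have hCtop : C < ⊤ :=
    ENNReal.div_lt_top (ENNReal.mul_ne_top hM ENNReal.ofReal_ne_top) hδ.ne'
  suffices h : ∀ ε : ℝ≥0∞, 0 < ε → ε ≠ ⊤ → ν A ≤ C * ε by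
    by_cases hC0 : C = 0
    · simpa [hC0] using h 1 one_pos ENNReal.one_ne_top
    · refine le_antisymm (ENNReal.le_of_forall_pos_le_add fun ε hε _ => ?_) zero_le
      have hεC : (0 : ℝ≥0∞) < (ε : ℝ≥0∞) / C := ENNReal.div_pos (by simpa using hε.ne') hCtop.ne
      have hεCt : (ε : ℝ≥0∞) / C ≠ ⊤ := by
        exact (ENNReal.div_lt_top ENNReal.coe_ne_top hC0).ne
      calc ν A ≤ C * ((ε : ℝ≥0∞) / C) := h _ hεC hεCt
        _ = ε := ENNReal.mul_div_cancel hC0 hCtop.ne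
        _ ≤ 0 + ε := by simp
  intro ε hε hεt
  -- find an open set `U ⊇ A` with `η U < ε`
  obtain ⟨U, hUo, hAU, hUε⟩ : ∃ U : Set Y, IsOpen U ∧ A ⊆ U ∧ η U < ε := by
    have h0 : (⨅ (U : Set Y) (_ : IsOpen U) (_ : A ⊆ U), η U) < ε := by
      rw [← hreg A, hηA]; exact hε
    simp only [iInf_lt_iff] at h0
    obtain ⟨U, hUo, hAU, hUε⟩ := h0
    exact ⟨U, hUo, hAU, hUε⟩
  -- choose good radii
  have hrad : ∀ y ∈ A, ∃ r : ℝ, 0 < r ∧ r ≤ 1 ∧ ball y r ⊆ U ∧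
      ν (ball y r) ≤ M * ENNReal.ofReal (r ^ κ) ∧
      δ * ENNReal.ofReal ((r / 6) ^ κ) ≤ η (ball y (r / 6)) := by
    intro y hy
    obtain ⟨hyM, hyδ⟩ := hA y hy
    -- eventual lower bound for η
    have hev : ∀ᶠ r in 𝓝[>] (0 : ℝ), δ <
        η (ball y r) / ENNReal.ofReal (r ^ κ) := by
      exact eventually_lt_of_lt_liminf hyδ
    obtain ⟨r0, hr0pos, hr0⟩ : ∃ r0 > 0, ∀ t ∈ Ioo (0 : ℝ) r0,
        δ < η (ball y t) / ENNReal.ofReal (t ^ κ) := by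
      rcases (mem_nhdsGT_iff_exists_Ioo_subset).1 hev with ⟨r0, hr0, hsub⟩
      exact ⟨r0, hr0, fun t ht => hsub ht⟩
    obtain ⟨r1, hr1pos, hr1⟩ : ∃ r1 > 0, ball y r1 ⊆ U :=
      Metric.isOpen_iff.1 hUo y (hAU hy)
    -- frequent upper bound for ν
    have hfreq : ∃ᶠ r in 𝓝[>] (0 : ℝ),
        ν (ball y r) / ENNReal.ofReal (r ^ κ) < M := frequently_lt_of_liminf_lt (by isBoundedDefault) hyM
    have hmem : Ioo (0 : ℝ) (min 1 (min r0 r1)) ∈ 𝓝[>] (0 : ℝ) :=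
      Ioo_mem_nhdsGT_of_mem ⟨le_refl _, by positivity⟩
    obtain ⟨r, hrν, hrIoo⟩ := (hfreq.and_eventually (eventually_of_mem hmem fun t ht => ht)).exists
    obtain ⟨hrpos, hrlt⟩ := hrIoo
    have hr1' : r < 1 := hrlt.trans_le (min_le_left _ _)
    have hrr0 : r < r0 := hrlt.trans_le ((min_le_right _ _).trans (min_le_left _ _))
    have hrr1 : r < r1 := hrlt.trans_le ((min_le_right _ _).trans (min_le_right _ _))
    have hrκpos : 0 < r ^ κ := Real.rpow_pos_of_pos hrpos κ
    have hb0 : ENNReal.ofReal (r ^ κ) ≠ 0 := by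
      simpa using ENNReal.ofReal_pos.2 hrκpos |>.ne'
    refine ⟨r, hrpos, hr1'.le, (ball_subset_ball hrr1.le).trans hr1, ?_, ?_⟩
    · have := (ENNReal.div_lt_iff (Or.inl hb0) (Or.inl ENNReal.ofReal_ne_top)).1 hrν
      exact this.le
    · have h6 : r / 6 ∈ Ioo (0 : ℝ) r0 := ⟨by positivity, by linarith⟩
      have := hr0 _ h6
      have hb0' : ENNReal.ofReal ((r / 6) ^ κ) ≠ 0 := by
        simpa using (ENNReal.ofReal_pos.2 (Real.rpow_pos_of_pos h6.1 κ)).ne'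
      exact ((ENNReal.lt_div_iff_mul_lt (Or.inl hb0') (Or.inl ENNReal.ofReal_ne_top)).1 this).le
  choose! rad hradpos hrad1 hradU hradν hradη using hrad
  -- Vitali covering
  obtain ⟨u, huA, hudisj, hucov⟩ :=
    Vitali.exists_disjoint_subfamily_covering_enlargement_closedBall A id
      (fun y => rad y / 6) 1 (fun y hy => by
        have := hrad1 y hy; have := hradpos y hy; linarith)
      4 (by norm_num)
  -- the covering by big balls
  have hcover : A ⊆ ⋃ b ∈ u, ball b (rad b) := by
    intro a ha
    obtain ⟨b, hbu, hab⟩ := hucov a ha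
    have hb : a ∈ closedBall (id a) (rad a / 6) :=
      mem_closedBall_self (by have := hradpos a ha; positivity)
    have hbA := huA hbu
    have : a ∈ closedBall (id b) (4 * (rad b / 6)) := hab hb
    refine mem_iUnion₂.2 ⟨b, hbu, ?_⟩
    have := hradpos b hbA
    rw [mem_ball]
    calc dist a b ≤ 4 * (rad b / 6) := by simpa using hab hb
      _ < rad b := by linarith [hradpos b hbA]
  -- countability of u
  have hucount : u.Countable := by
    apply hudisj.countable_of_nonempty_interior
    intro b hb
    have hbpos : 0 < rad b / 6 := by have := hradpos b (huA hb); positivity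
    refine ⟨b, interior_mono ball_subset_closedBall ?_⟩
    rw [isOpen_ball.interior_eq]
    exact mem_ball_self hbpos
  -- small balls are pairwise disjoint and contained in U
  have hsmalldisj : u.PairwiseDisjoint fun b => ball b (rad b / 6) := by
    intro a ha b hb hab
    exact (hudisj ha hb hab).mono ball_subset_closedBall ball_subset_closedBall
  have hsmallU : ∀ b ∈ u, ball b (rad b / 6) ⊆ U := fun b hb =>
    (ball_subset_ball (by have := hradpos b (huA hb); linarith)).trans (hradU b (huA hb))
  -- per-ball estimate
  have hball : ∀ b ∈ u, ν (ball b (rad b)) ≤ C * η (ball b (rad b / 6)) := by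
    intro b hb
    have hbA := huA hb
    have hpos := hradpos b hbA
    have h1 : ν (ball b (rad b)) ≤ M * ENNReal.ofReal ((rad b) ^ κ) := hradν b hbA
    have h2 : δ * ENNReal.ofReal ((rad b / 6) ^ κ) ≤ η (ball b (rad b / 6)) := hradη b hbA
    have hrw : (rad b) ^ κ = 6 ^ κ * (rad b / 6) ^ κ := by
      rw [← Real.mul_rpow (by norm_num) (by positivity)]
      ring_nf
    have h3 : ENNReal.ofReal ((rad b / 6) ^ κ) ≤ η (ball b (rad b / 6)) / δ :=
      (ENNReal.le_div_iff_mul_le (Or.inl hδ.ne') (Or.inl hδt)).2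
        (by rwa [mul_comm])
    calc ν (ball b (rad b)) ≤ M * ENNReal.ofReal ((rad b) ^ κ) := h1
      _ = M * ENNReal.ofReal (6 ^ κ) * ENNReal.ofReal ((rad b / 6) ^ κ) := by
          rw [hrw, ENNReal.ofReal_mul (by positivity), mul_assoc]
      _ ≤ M * ENNReal.ofReal (6 ^ κ) * (η (ball b (rad b / 6)) / δ) := by gcongr
      _ = C * η (ball b (rad b / 6)) := by
          rw [hC, ENNReal.div_eq_inv_mul, ENNReal.div_eq_inv_mul]; ring
  -- put it all together
  calc ν A ≤ ν (⋃ b ∈ u, ball b (rad b)) := measure_mono hcover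
    _ ≤ ∑' b : u, ν (ball b (rad b)) := measure_biUnion_le ν hucount _
    _ ≤ ∑' b : u, C * η (ball (b : Y) (rad b / 6)) :=
        ENNReal.tsum_le_tsum fun b => hball b b.2
    _ = C * ∑' b : u, η (ball (b : Y) (rad b / 6)) := ENNReal.tsum_mul_left
    _ = C * η (⋃ b ∈ u, ball b (rad b / 6)) := by
        rw [measure_biUnion hucount hsmalldisj fun b _ => measurableSet_ball]
    _ ≤ C * η U := by
        gcongr
        exact iUnion₂_subset hsmallU
    _ ≤ C * ε := mul_le_mul_right hUε.le C

theorem absolutelyContinuous_of_density {Y : Type*}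
    [MetricSpace Y] [TopologicalSpace.SeparableSpace Y] [MeasurableSpace Y] [BorelSpace Y]
    (κ : ℝ) (hκ : 0 < κ) (ν η : Measure Y) (hreg : UpperRegular η)
    (hν : ∀ᵐ y ∂ν, dens κ ν y < ⊤)
    (hη : ∀ y : Y, 0 < dens κ η y) :
    ν ≪ η := by
  refine Measure.AbsolutelyContinuous.mk fun s hs hηs => ?_
  set N : Set Y := {y | ¬ dens κ ν y < ⊤} with hN
  have hνN : ν N = 0 := by
    rw [hN]; exact hν
  set E : ℕ → ℕ → Set Y := fun m n =>
    {y | dens κ ν y < (m : ℝ≥0∞) ∧ ((n : ℝ≥0∞) + 1)⁻¹ < dens κ η y} with hE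
  have hsub : s ⊆ N ∪ ⋃ (m : ℕ) (n : ℕ), s ∩ E m n := by
    intro y hy
    by_cases hyN : y ∈ N
    · exact Or.inl hyN
    · right
      simp only [hN, mem_setOf_eq, not_not] at hyN
      obtain ⟨m, hm⟩ := ENNReal.exists_nat_gt hyN.ne
      obtain ⟨n, hn⟩ := ENNReal.exists_inv_nat_lt (hη y).ne'
      refine mem_iUnion₂.2 ⟨m, n, hy, hm, lt_of_le_of_lt ?_ hn⟩
      exact ENNReal.inv_le_inv.2 (by simp)
  have hzero : ∀ m n : ℕ, ν (s ∩ E m n) = 0 := by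
    intro m n
    refine key_density_lemma κ hκ ν η hreg (m : ℝ≥0∞) ((n : ℝ≥0∞) + 1)⁻¹
      (by simp) (ENNReal.inv_pos.2 (by simp)) (by simp) _ (fun y hy => hy.2) ?_
    exact measure_mono_null inter_subset_left hηs
  refine le_antisymm ?_ zero_le
  calc ν s ≤ ν (N ∪ ⋃ (m : ℕ) (n : ℕ), s ∩ E m n) := measure_mono hsub
    _ ≤ ν N + ν (⋃ (m : ℕ) (n : ℕ), s ∩ E m n) := measure_union_le _ _
    _ ≤ 0 + ∑' (m : ℕ), ν (⋃ n : ℕ, s ∩ E m n) := by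
        rw [hνN]; gcongr; exact measure_iUnion_le _
    _ ≤ ∑' (m : ℕ), ∑' (n : ℕ), ν (s ∩ E m n) := by
        rw [zero_add]; exact ENNReal.tsum_le_tsum fun m => measure_iUnion_le _
    _ = 0 := by simp [hzero]
end

section
/- Let Y be a separable metric space, κ > 0, and let ν and η be Borel measures on Y with η upper regular by open sets and σ-finite, such that D^κν(y) < ∞ for ν-almost every y ∈ Y. If there is c > 0 with D^κη(y) ≥ c for all y ∈ Y, then for every Borel set B ⊆ Y one has ν(B) ≤ 5^κ c^{-1} ∫_B D^κν dη; in particular ν ≪ η and the Radon–Nikodym derivative satisfies dν/dη ≤ 5^κ c^{-1} D^κν η-almost everywhere. -/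
open scoped ENNReal NNReal
open MeasureTheory Metric Filter Set Topology

section Aux

variable {Y : Type*} [MetricSpace Y] [MeasurableSpace Y] [BorelSpace Y]

private lemma lsc_measure_ball (ν : Measure Y) (r : ℝ) :
    LowerSemicontinuous fun y : Y => ν (ball y r) := by
  intro y a ha
  have ha' : a < ν (ball y r) := ha
  rcases le_or_gt r 0 with hr | hr
  · rw [ball_eq_empty.2 hr] at ha'
    simp at ha'
  · have hseq : ball y r = ⋃ n : ℕ, ball y (r - r / (n + 2)) := by
      ext z
      simp only [mem_ball, mem_iUnion]
      constructor
      · intro hz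
        have hpos : 0 < r - dist z y := by linarith
        obtain ⟨n, hn⟩ := exists_nat_gt (r / (r - dist z y))
        refine ⟨n, ?_⟩
        have h2 : r / (r - dist z y) < (n : ℝ) + 2 := by linarith
        have h3 : r < ((n : ℝ) + 2) * (r - dist z y) := (div_lt_iff₀ hpos).1 h2
        have h4 : r / ((n : ℝ) + 2) < r - dist z y := by
          rw [div_lt_iff₀ (by positivity)]
          nlinarith
        linarith
      · rintro ⟨n, hn⟩
        have h1 : 0 ≤ r / ((n : ℝ) + 2) := by positivity
        linarith
    rw [hseq] at ha'
    have hmono : Monotone fun n : ℕ => ball y (r - r / (n + 2)) := by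
      intro m n hmn
      apply ball_subset_ball
      have h1 : (0 : ℝ) < (m : ℝ) + 2 := by positivity
      have h2 : ((m : ℝ) + 2) ≤ (n : ℝ) + 2 := by exact_mod_cast by omega
      have : r / ((n : ℝ) + 2) ≤ r / ((m : ℝ) + 2) :=
        div_le_div_of_nonneg_left hr.le h1 h2
      linarith
    rw [Directed.measure_iUnion hmono.directed_le] at ha'
    obtain ⟨n, hn⟩ := lt_iSup_iff.1 ha'
    have hrn : 0 < r / ((n : ℝ) + 2) := by positivity
    filter_upwards [ball_mem_nhds y hrn] with y' hy'
    refine hn.trans_le (measure_mono fun z hz => ?_)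
    simp only [mem_ball] at *
    have h3 := dist_triangle z y y'
    have h4 : dist y y' = dist y' y := dist_comm y y'
    linarith

private lemma measurable_measure_ball' (ν : Measure Y) (r : ℝ) :
    Measurable fun y : Y => ν (ball y r) :=
  (lsc_measure_ball ν r).measurable

set_option maxHeartbeats 1000000 in
private lemma dens_eq_rat {κ : ℝ} (hκ : 0 < κ) (ν : Measure Y) (y : Y) :
    dens κ ν y = liminf (fun q : ℚ => ν (ball y (q : ℝ)) / ENNReal.ofReal ((q : ℝ) ^ κ))
      (comap ((↑) : ℚ → ℝ) (𝓝[>] 0)) := by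
  have B1 : (𝓝[>] (0 : ℝ)).HasBasis (fun δ : ℝ => 0 < δ) (Ioo 0) := nhdsGT_basis 0
  have B2 := B1.comap ((↑) : ℚ → ℝ)
  rw [dens, B1.liminf_eq_iSup_iInf, B2.liminf_eq_iSup_iInf]
  refine iSup_congr fun δ => iSup_congr fun hδ => le_antisymm ?_ ?_
  · exact le_iInf₂ fun q hq => iInf₂_le (q : ℝ) hq
  · refine le_iInf₂ fun r hr => ?_
    obtain ⟨hr0, hrδ⟩ := hr
    have hfin : ENNReal.ofReal (r ^ κ) ≠ 0 :=
      (ENNReal.ofReal_pos.2 (Real.rpow_pos_of_pos hr0 κ)).ne'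
    -- limit of the auxiliary factors
    have hg : Tendsto (fun n : ℕ => ENNReal.ofReal ((1 - 1 / ((n : ℝ) + 2)) ^ κ)) atTop (𝓝 1) := by
      have h1 : Tendsto (fun n : ℕ => (1 - 1 / ((n : ℝ) + 2))) atTop (𝓝 1) := by
        have h0 : Tendsto (fun n : ℕ => 1 / ((n : ℝ) + 2)) atTop (𝓝 0) := by
          simp only [one_div]
          exact (tendsto_atTop_add_const_right atTop 2
            tendsto_natCast_atTop_atTop).inv_tendsto_atTop
        have := tendsto_const_nhds (x := (1 : ℝ)) (f := atTop (α := ℕ)) |>.sub h0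
        simpa using this
      have h2 : Tendsto (fun n : ℕ => (1 - 1 / ((n : ℝ) + 2)) ^ κ) atTop (𝓝 1) := by
        have := h1.rpow (tendsto_const_nhds (x := κ)) (Or.inl one_ne_zero)
        simpa using this
      have := (ENNReal.continuous_ofReal.tendsto 1).comp h2
      simpa [Function.comp_def] using this
    have hdiv : Tendsto
        (fun n : ℕ => (ν (ball y r) / ENNReal.ofReal (r ^ κ)) /
          ENNReal.ofReal ((1 - 1 / ((n : ℝ) + 2)) ^ κ)) atTop
        (𝓝 (ν (ball y r) / ENNReal.ofReal (r ^ κ))) := by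
      have hinv : Tendsto (fun n : ℕ => (ENNReal.ofReal ((1 - 1 / ((n : ℝ) + 2)) ^ κ))⁻¹)
          atTop (𝓝 1) := by
        have := ENNReal.tendsto_inv_iff.2 hg
        simpa using this
      have := ENNReal.Tendsto.const_mul (a := ν (ball y r) / ENNReal.ofReal (r ^ κ)) hinv
        (Or.inl one_ne_zero)
      simpa [div_eq_mul_inv, mul_one] using this
    refine ge_of_tendsto hdiv (Eventually.of_forall fun n => ?_)
    set θ : ℝ := 1 - 1 / ((n : ℝ) + 2) with hθdef
    have hn2 : (0 : ℝ) < (n : ℝ) + 2 := by positivity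
    have hfrac0 : 0 < 1 / ((n : ℝ) + 2) := by positivity
    have hfrac1 : 1 / ((n : ℝ) + 2) < 1 := by
      rw [div_lt_one hn2]; linarith [Nat.cast_nonneg (α := ℝ) n]
    have hθ0 : 0 < θ := by simp only [hθdef]; linarith
    have hθ1 : θ < 1 := by simp only [hθdef]; linarith
    obtain ⟨q, hq1, hq2⟩ := exists_rat_btwn (show θ * r < r by nlinarith)
    have hq0 : 0 < (q : ℝ) := lt_trans (by positivity) hq1
    have hmem : (q : ℝ) ∈ Ioo (0 : ℝ) δ := ⟨hq0, hq2.trans hrδ⟩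
    have hx0 : ENNReal.ofReal (θ ^ κ) ≠ 0 :=
      (ENNReal.ofReal_pos.2 (Real.rpow_pos_of_pos hθ0 κ)).ne'
    calc ⨅ q ∈ ((↑) : ℚ → ℝ) ⁻¹' Ioo 0 δ,
          ν (ball y (q : ℝ)) / ENNReal.ofReal ((q : ℝ) ^ κ)
        ≤ ν (ball y (q : ℝ)) / ENNReal.ofReal ((q : ℝ) ^ κ) := iInf₂_le q hmem
      _ ≤ ν (ball y r) / ENNReal.ofReal ((θ * r) ^ κ) := by
          refine ENNReal.div_le_div (measure_mono (ball_subset_ball hq2.le)) ?_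
          exact ENNReal.ofReal_le_ofReal (Real.rpow_le_rpow (by positivity) hq1.le hκ.le)
      _ = (ν (ball y r) / ENNReal.ofReal (r ^ κ)) / ENNReal.ofReal (θ ^ κ) := by
          rw [Real.mul_rpow hθ0.le hr0.le, ENNReal.ofReal_mul (by positivity)]
          rw [div_eq_mul_inv, div_eq_mul_inv, div_eq_mul_inv,
            ENNReal.mul_inv (Or.inl hx0) (Or.inl ENNReal.ofReal_ne_top)]
          ring

private lemma measurable_dens {κ : ℝ} (hκ : 0 < κ) (ν : Measure Y) :
    Measurable (dens κ ν) := by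
  have heq : dens κ ν = fun y =>
      liminf (fun q : ℚ => ν (ball y (q : ℝ)) / ENNReal.ofReal ((q : ℝ) ^ κ))
        (comap ((↑) : ℚ → ℝ) (𝓝[>] 0)) := funext fun y => dens_eq_rat hκ ν y
  rw [heq]
  have hB : (𝓝[>] (0 : ℝ)).HasBasis (fun q : ℚ => 0 < q) (fun q => Ioo (0 : ℝ) (q : ℝ)) := by
    refine (nhdsGT_basis (0 : ℝ)).to_hasBasis (fun δ hδ => ?_) (fun q hq => ?_)
    · obtain ⟨q, hq1, hq2⟩ := exists_rat_btwn hδ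
      exact ⟨q, by exact_mod_cast hq1, Ioo_subset_Ioo_right hq2.le⟩
    · exact ⟨(q : ℝ), by exact_mod_cast hq, subset_rfl⟩
  have hCB : (comap ((↑) : ℚ → ℝ) (𝓝[>] (0 : ℝ))).HasCountableBasis (fun q : ℚ => 0 < q)
      (fun q => ((↑) : ℚ → ℝ) ⁻¹' Ioo (0 : ℝ) (q : ℝ)) := ⟨hB.comap _, to_countable _⟩
  exact Measurable.liminf'
    (fun q => (measurable_measure_ball' ν (q : ℝ)).div measurable_const)
    hCB (fun j => to_countable _)

variable [TopologicalSpace.SeparableSpace Y]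

set_option maxHeartbeats 1000000 in
private lemma key_estimate {κ : ℝ} (hκ : 0 < κ) (ν η : Measure Y) (hreg : UpperRegular η)
    {c : ℝ} (hc : 0 < c) (hη : ∀ y : Y, ENNReal.ofReal c ≤ dens κ η y)
    (A : Set Y) (t : ℝ≥0∞) (ht : t ≠ ∞) (hA : ∀ y ∈ A, dens κ ν y < t) :
    ν A ≤ ENNReal.ofReal (5 ^ κ * c⁻¹) * t * η A := by
  rcases eq_or_ne (η A) ∞ with hηA | hηA
  · rcases eq_or_ne t 0 with rfl | ht0
    · have : A = ∅ := eq_empty_iff_forall_notMem.2 fun y hy => by simpa using hA y hy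
      simp [this]
    · have hne : ENNReal.ofReal (5 ^ κ * c⁻¹) * t ≠ 0 := by
        refine mul_ne_zero ?_ ht0
        exact (ENNReal.ofReal_pos.2 (by positivity)).ne'
      rw [hηA, ENNReal.mul_top hne]
      exact le_top
  -- main ε-estimate
  have main : ∀ ε : ℝ, 0 < ε → ε < c →
      ν A ≤ ENNReal.ofReal (5 ^ κ) * (ENNReal.ofReal (c - ε))⁻¹ * t *
        (η A + ENNReal.ofReal ε) := by
    intro ε hε hεc
    set b : ℝ≥0∞ := ENNReal.ofReal (c - ε) with hbdef
    have hb0 : b ≠ 0 := (ENNReal.ofReal_pos.2 (by linarith)).ne'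
    have hbt : b ≠ ∞ := ENNReal.ofReal_ne_top
    have hbc : b < ENNReal.ofReal c := (ENNReal.ofReal_lt_ofReal_iff hc).2 (by linarith)
    have hU : ∃ U : Set Y, IsOpen U ∧ A ⊆ U ∧ η U < η A + ENNReal.ofReal ε := by
      by_contra h
      push_neg at h
      have h2 : η A + ENNReal.ofReal ε ≤ η A := by
        calc η A + ENNReal.ofReal ε
            ≤ ⨅ (U : Set Y) (_ : IsOpen U) (_ : A ⊆ U), η U :=
              le_iInf fun U => le_iInf fun hUo => le_iInf fun hAU => h U hUo hAU
          _ = η A := (hreg A).symm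
      exact absurd h2 (not_le.2 (ENNReal.lt_add_right hηA (ENNReal.ofReal_pos.2 hε).ne'))
    obtain ⟨U, hUo, hAU, hUlt⟩ := hU
    have hrad : ∀ y ∈ A, ∃ s : ℝ, 0 < s ∧ s ≤ 1 ∧ closedBall y (s / 5) ⊆ U ∧
        ν (ball y s) < t * ENNReal.ofReal (s ^ κ) ∧
        b * ENNReal.ofReal ((s / 5) ^ κ) ≤ η (closedBall y (s / 5)) := by
      intro y hy
      obtain ⟨δ2, hδ2, hδ2U⟩ := Metric.isOpen_iff.1 hUo y (hAU hy)
      have E1 : ∀ᶠ r in 𝓝[>] (0 : ℝ), b < η (ball y r) / ENNReal.ofReal (r ^ κ) :=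
        eventually_lt_of_lt_liminf (lt_of_lt_of_le hbc (hη y))
      have T5 : Tendsto (fun s : ℝ => s / 5) (𝓝[>] 0) (𝓝[>] 0) := by
        apply tendsto_nhdsWithin_of_tendsto_nhds_of_eventually_within
        · have := ((continuous_id.div_const (5 : ℝ)).tendsto 0).mono_left
            (nhdsWithin_le_nhds (s := Ioi (0 : ℝ)))
          simpa using this
        · filter_upwards [self_mem_nhdsWithin] with x hx
          have : (0 : ℝ) < x := hx
          exact mem_Ioi.2 (by positivity)
      have E1' : ∀ᶠ s in 𝓝[>] (0 : ℝ),
          b < η (ball y (s / 5)) / ENNReal.ofReal ((s / 5) ^ κ) := T5.eventually E1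
      have E2 : ∀ᶠ s in 𝓝[>] (0 : ℝ), s ∈ Ioo (0 : ℝ) (min 1 (5 * δ2)) :=
        Ioo_mem_nhdsGT_of_mem ⟨le_rfl, lt_min one_pos (by positivity)⟩
      have E3 : ∃ᶠ s in 𝓝[>] (0 : ℝ), ν (ball y s) / ENNReal.ofReal (s ^ κ) < t :=
        frequently_lt_of_liminf_lt (h := hA y hy)
      obtain ⟨s, ⟨h1, hs0, hsm⟩, h3⟩ := ((E1'.and E2).and_frequently E3).exists
      have hs5 : 0 < s / 5 := by positivity
      have hd0 : ENNReal.ofReal ((s / 5) ^ κ) ≠ 0 :=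
        (ENNReal.ofReal_pos.2 (Real.rpow_pos_of_pos hs5 κ)).ne'
      refine ⟨s, hs0, (lt_min_iff.1 hsm).1.le, ?_, ?_, ?_⟩
      · refine (closedBall_subset_ball ?_).trans hδ2U
        have := (lt_min_iff.1 hsm).2
        linarith
      · have hden0 : ENNReal.ofReal (s ^ κ) ≠ 0 :=
          (ENNReal.ofReal_pos.2 (Real.rpow_pos_of_pos hs0 κ)).ne'
        exact (ENNReal.div_lt_iff (Or.inl hden0) (Or.inl ENNReal.ofReal_ne_top)).1 h3
      · have := (ENNReal.lt_div_iff_mul_lt (Or.inl hd0)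
          (Or.inl ENNReal.ofReal_ne_top)).1 h1
        exact le_trans this.le (measure_mono ball_subset_closedBall)
    choose! s hs using hrad
    obtain ⟨u, huA, hdisj, hcov⟩ :=
      Vitali.exists_disjoint_subfamily_covering_enlargement_closedBall A id
        (fun y => s y / 5) (1 / 5)
        (fun a ha => by have := (hs a ha).2.1; linarith) 4 (by norm_num)
    simp only [id_eq] at hdisj hcov
    have hcnt : u.Countable := by
      refine hdisj.countable_of_nonempty_interior fun y hy => ?_
      have hy0 : 0 < s y / 5 := by have := (hs y (huA hy)).1; positivity
      exact ⟨y, ball_subset_interior_closedBall (mem_ball_self hy0)⟩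
    have covball : A ⊆ ⋃ y ∈ u, ball y (s y) := by
      intro a ha
      obtain ⟨b', hbu, hsub⟩ := hcov a ha
      have hb' := hs b' (huA hbu)
      have ha' := hs a ha
      have hmem : a ∈ closedBall a (s a / 5) := mem_closedBall_self (by linarith [ha'.1])
      have h2 : a ∈ closedBall b' (4 * (s b' / 5)) := hsub hmem
      have h3 : a ∈ ball b' (s b') :=
        closedBall_subset_ball (by linarith [hb'.1]) h2
      exact mem_biUnion hbu h3
    calc ν A ≤ ν (⋃ y ∈ u, ball y (s y)) := measure_mono covball
      _ ≤ ∑' y : u, ν (ball y (s y)) := measure_biUnion_le ν hcnt _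
      _ ≤ ∑' y : u, (ENNReal.ofReal (5 ^ κ) * b⁻¹ * t) *
            (b * ENNReal.ofReal ((s y / 5) ^ κ)) := by
          refine ENNReal.tsum_le_tsum fun y => ?_
          have hy := hs y (huA y.2)
          have h2 : (s (y : Y)) ^ κ = 5 ^ κ * (s (y : Y) / 5) ^ κ := by
            rw [← Real.mul_rpow (by norm_num) (by have := hy.1; positivity)]
            congr 1
            ring
          calc ν (ball (y : Y) (s (y : Y))) ≤ t * ENNReal.ofReal ((s (y : Y)) ^ κ) :=
              hy.2.2.2.1.le
            _ = ENNReal.ofReal (5 ^ κ) * t * ENNReal.ofReal ((s (y : Y) / 5) ^ κ) := by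
                rw [h2, ENNReal.ofReal_mul (by positivity)]
                ring
            _ = (ENNReal.ofReal (5 ^ κ) * b⁻¹ * t) *
                (b * ENNReal.ofReal ((s (y : Y) / 5) ^ κ)) := by
                rw [show (ENNReal.ofReal (5 ^ κ) * b⁻¹ * t) *
                    (b * ENNReal.ofReal ((s (y : Y) / 5) ^ κ)) =
                    (ENNReal.ofReal (5 ^ κ) * t * ENNReal.ofReal ((s (y : Y) / 5) ^ κ)) *
                    (b⁻¹ * b) by ring, ENNReal.inv_mul_cancel hb0 hbt, mul_one]
      _ ≤ ∑' y : u, (ENNReal.ofReal (5 ^ κ) * b⁻¹ * t) * η (closedBall y (s y / 5)) := by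
          refine ENNReal.tsum_le_tsum fun y => mul_le_mul_right ?_ _
          exact (hs y (huA y.2)).2.2.2.2
      _ = (ENNReal.ofReal (5 ^ κ) * b⁻¹ * t) * ∑' y : u, η (closedBall y (s y / 5)) :=
          ENNReal.tsum_mul_left
      _ ≤ (ENNReal.ofReal (5 ^ κ) * b⁻¹ * t) * η U := by
          refine mul_le_mul_right ?_ _
          rw [← measure_biUnion hcnt hdisj (fun y hy => measurableSet_closedBall)]
          exact measure_mono (iUnion₂_subset fun y hy => (hs y (huA hy)).2.2.1)
      _ ≤ ENNReal.ofReal (5 ^ κ) * b⁻¹ * t * (η A + ENNReal.ofReal ε) :=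
          mul_le_mul_right hUlt.le _
  -- pass to the limit ε → 0
  have hlim : Tendsto (fun ε : ℝ => ENNReal.ofReal (5 ^ κ) * (ENNReal.ofReal (c - ε))⁻¹ * t *
      (η A + ENNReal.ofReal ε)) (𝓝[>] 0)
      (𝓝 (ENNReal.ofReal (5 ^ κ) * (ENNReal.ofReal c)⁻¹ * t * (η A + 0))) := by
    have hinner : Tendsto (fun ε : ℝ => (ENNReal.ofReal (c - ε))⁻¹) (𝓝[>] 0)
        (𝓝 (ENNReal.ofReal c)⁻¹) := by
      refine ENNReal.tendsto_inv_iff.2 ?_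
      have h1 : Tendsto (fun ε : ℝ => c - ε) (𝓝[>] 0) (𝓝 c) := by
        have h : Tendsto (fun ε : ℝ => c - ε) (𝓝 0) (𝓝 (c - 0)) :=
          (Continuous.tendsto (by fun_prop) 0)
        simpa using h.mono_left nhdsWithin_le_nhds
      exact (ENNReal.continuous_ofReal.tendsto c).comp h1
    have h1 : Tendsto (fun ε : ℝ => ENNReal.ofReal (5 ^ κ) * (ENNReal.ofReal (c - ε))⁻¹ * t)
        (𝓝[>] 0) (𝓝 (ENNReal.ofReal (5 ^ κ) * (ENNReal.ofReal c)⁻¹ * t)) := by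
      refine ENNReal.Tendsto.mul_const ?_ (Or.inl ?_)
      · exact ENNReal.Tendsto.const_mul hinner (Or.inr ENNReal.ofReal_ne_top)
      · refine mul_ne_zero (ENNReal.ofReal_pos.2 (by positivity)).ne' ?_
        exact ENNReal.inv_ne_zero.2 ENNReal.ofReal_ne_top
    have h2 : Tendsto (fun ε : ℝ => η A + ENNReal.ofReal ε) (𝓝[>] 0) (𝓝 (η A + 0)) := by
      refine Tendsto.add tendsto_const_nhds ?_
      have := (ENNReal.continuous_ofReal.tendsto 0).mono_left
        (nhdsWithin_le_nhds (s := Ioi (0 : ℝ)))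
      simpa using this
    refine ENNReal.Tendsto.mul h1 (Or.inr (by simp [hηA])) h2 (Or.inr ?_)
    exact ENNReal.mul_ne_top (ENNReal.mul_ne_top ENNReal.ofReal_ne_top
      (ENNReal.inv_ne_top.2 (ENNReal.ofReal_pos.2 hc).ne')) ht
  have hfinal : ν A ≤ ENNReal.ofReal (5 ^ κ) * (ENNReal.ofReal c)⁻¹ * t * (η A + 0) := by
    refine ge_of_tendsto hlim ?_
    filter_upwards [Ioo_mem_nhdsGT_of_mem (show (0 : ℝ) ∈ Ico (0 : ℝ) c from ⟨le_rfl, hc⟩)]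
      with ε hε using main ε hε.1 hε.2
  rw [ENNReal.ofReal_mul (by positivity), ENNReal.ofReal_inv_of_pos hc]
  simpa [add_zero] using hfinal

end Aux

set_option maxHeartbeats 1000000 in
theorem density_bounds_rnDeriv {Y : Type*}
    [MetricSpace Y] [TopologicalSpace.SeparableSpace Y] [MeasurableSpace Y] [BorelSpace Y]
    (κ : ℝ) (hκ : 0 < κ) (ν η : Measure Y) (hreg : UpperRegular η) [SigmaFinite η]
    (hν : ∀ᵐ y ∂ν, dens κ ν y < ⊤)
    (c : ℝ) (hc : 0 < c) (hη : ∀ y : Y, ENNReal.ofReal c ≤ dens κ η y) :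
    (∀ B : Set Y, MeasurableSet B →
        ν B ≤ ENNReal.ofReal (5 ^ κ * c⁻¹) * ∫⁻ y in B, dens κ ν y ∂η) ∧
      ν ≪ η ∧
      ∀ᵐ y ∂η, ν.rnDeriv η y ≤ ENNReal.ofReal (5 ^ κ * c⁻¹) * dens κ ν y := by
  set C : ℝ≥0∞ := ENNReal.ofReal (5 ^ κ * c⁻¹) with hC
  have hCt : C ≠ ∞ := ENNReal.ofReal_ne_top
  have hDmeas : Measurable (dens κ ν) := measurable_dens hκ ν
  have hkey := key_estimate hκ ν η hreg hc hη
  have hνtop : ν {y | dens κ ν y = ∞} = 0 :=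
    measure_mono_null (fun y hy => not_lt.2 (ge_of_eq hy)) (ae_iff.1 hν)
  -- main inequality
  have main : ∀ B : Set Y, MeasurableSet B → ν B ≤ C * ∫⁻ y in B, dens κ ν y ∂η := by
    intro B hB
    have step : ∀ δ : ℝ≥0, 0 < δ →
        ν B ≤ ((1 : ℝ≥0∞) + δ) * (C * ∫⁻ y in B, dens κ ν y ∂η) := by
      intro δ hδ
      set q : ℝ≥0∞ := 1 + δ with hq
      have hq1 : 1 < q := ENNReal.lt_add_right ENNReal.one_ne_top (by exact_mod_cast hδ.ne')
      have hq0 : q ≠ 0 := (zero_lt_one.trans hq1).ne'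
      have hqt : q ≠ ∞ := ENNReal.add_ne_top.2 ⟨ENNReal.one_ne_top, ENNReal.coe_ne_top⟩
      set S : ℤ → Set Y := fun n =>
        B ∩ {y | q ^ n ≤ dens κ ν y ∧ dens κ ν y < q ^ (n + 1)} with hS
      have hSm : ∀ n, MeasurableSet (S n) := fun n =>
        hB.inter ((hDmeas measurableSet_Ici).inter (hDmeas measurableSet_Iio))
      have hSd : Pairwise (Function.onFun Disjoint S) := by
        have hgen : ∀ m n : ℤ, m < n → Disjoint (S m) (S n) := by
          intro m n hlt
          refine Set.disjoint_left.2 ?_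
          rintro y ⟨-, hy1, hy2⟩ ⟨-, hy3, -⟩
          have : q ^ (m + 1) ≤ q ^ n := ENNReal.zpow_le_of_le hq1.le (by omega)
          exact absurd (hy2.trans_le (this.trans hy3)) (lt_irrefl _)
        intro m n hmn
        rcases lt_or_gt_of_ne hmn with h | h
        · exact hgen m n h
        · exact (hgen n m h).symm
      have hB0 : ν (B ∩ {y | dens κ ν y = 0}) = 0 := by
        set B0 := B ∩ {y | dens κ ν y = 0} with hB0def
        have hcover : B0 = ⋃ k, B0 ∩ spanningSets η k := by
          rw [← inter_iUnion, iUnion_spanningSets, inter_univ]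
        refine le_antisymm ?_ (zero_le)
        rw [hcover]
        refine le_trans (measure_iUnion_le _) ?_
        have hk : ∀ k, ν (B0 ∩ spanningSets η k) = 0 := by
          intro k
          refine le_antisymm ?_ (zero_le)
          have hlim : Tendsto (fun x : ℝ => (C * η (spanningSets η k)) * ENNReal.ofReal x)
              (𝓝[>] 0) (𝓝 0) := by
            have h1 : Tendsto (fun x : ℝ => ENNReal.ofReal x) (𝓝[>] 0) (𝓝 0) := by
              have := (ENNReal.continuous_ofReal.tendsto 0).mono_left
                (nhdsWithin_le_nhds (s := Ioi (0 : ℝ)))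
              simpa using this
            have := ENNReal.Tendsto.const_mul h1
              (Or.inr (ENNReal.mul_ne_top hCt (measure_spanningSets_lt_top η k).ne))
            simpa using this
          refine ge_of_tendsto hlim ?_
          filter_upwards [Ioo_mem_nhdsGT_of_mem
            (show (0 : ℝ) ∈ Ico (0 : ℝ) 1 from ⟨le_rfl, one_pos⟩)] with x hx
          calc ν (B0 ∩ spanningSets η k)
              ≤ C * ENNReal.ofReal x * η (B0 ∩ spanningSets η k) := by
                refine hkey _ _ ENNReal.ofReal_ne_top fun y hy => ?_
                have : dens κ ν y = 0 := hy.1.2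
                rw [this]
                exact ENNReal.ofReal_pos.2 hx.1
            _ ≤ C * ENNReal.ofReal x * η (spanningSets η k) := by
                gcongr
                exact inter_subset_right
            _ = (C * η (spanningSets η k)) * ENNReal.ofReal x := by ring
        simp [hk]
      have hBinf : ν (B ∩ {y | dens κ ν y = ∞}) = 0 :=
        measure_mono_null inter_subset_right hνtop
      have hcov : B ⊆ (B ∩ {y | dens κ ν y = ∞}) ∪
          ((B ∩ {y | dens κ ν y = 0}) ∪ ⋃ n : ℤ, S n) := by
        intro y hy
        rcases eq_or_ne (dens κ ν y) ∞ with htop | htop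
        · exact Or.inl ⟨hy, htop⟩
        rcases eq_or_ne (dens κ ν y) 0 with h0 | h0
        · exact Or.inr (Or.inl ⟨hy, h0⟩)
        · obtain ⟨n, hn⟩ := ENNReal.exists_mem_Ico_zpow h0 htop hq1 hqt
          exact Or.inr (Or.inr (mem_iUnion.2 ⟨n, hy, hn.1, hn.2⟩))
      calc ν B ≤ ν (B ∩ {y | dens κ ν y = ∞}) +
            (ν (B ∩ {y | dens κ ν y = 0}) + ν (⋃ n : ℤ, S n)) :=
          le_trans (measure_mono hcov) (le_trans (measure_union_le _ _)
            (add_le_add le_rfl (measure_union_le _ _)))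
        _ = ν (⋃ n : ℤ, S n) := by rw [hBinf, hB0, zero_add, zero_add]
        _ ≤ ∑' n : ℤ, ν (S n) := measure_iUnion_le _
        _ ≤ ∑' n : ℤ, (q * C) * (q ^ n * η (S n)) := by
            refine ENNReal.tsum_le_tsum fun n => ?_
            have h1 := hkey (S n) (q ^ (n + 1)) (ENNReal.zpow_lt_top hq0 hqt _).ne
              (fun y hy => hy.2.2)
            refine h1.trans (le_of_eq ?_)
            rw [ENNReal.zpow_add hq0 hqt n 1, zpow_one]
            ring
        _ ≤ ∑' n : ℤ, (q * C) * ∫⁻ y in S n, dens κ ν y ∂η := by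
            refine ENNReal.tsum_le_tsum fun n => mul_le_mul_right ?_ _
            calc q ^ n * η (S n) = ∫⁻ _ in S n, q ^ n ∂η := by
                  rw [setLIntegral_const]
              _ ≤ ∫⁻ y in S n, dens κ ν y ∂η :=
                  setLIntegral_mono' (hSm n) fun y hy => hy.2.1
        _ = (q * C) * ∑' n : ℤ, ∫⁻ y in S n, dens κ ν y ∂η := ENNReal.tsum_mul_left
        _ = (q * C) * ∫⁻ y in ⋃ n : ℤ, S n, dens κ ν y ∂η := by
            rw [lintegral_iUnion hSm hSd]
        _ ≤ (q * C) * ∫⁻ y in B, dens κ ν y ∂η :=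
            mul_le_mul_right (lintegral_mono_set (iUnion_subset fun n => inter_subset_left)) _
        _ = ((1 : ℝ≥0∞) + δ) * (C * ∫⁻ y in B, dens κ ν y ∂η) := by
            rw [hq]; ring
    have hlim2 : Tendsto (fun δ : ℝ≥0 => ((1 : ℝ≥0∞) + δ) *
        (C * ∫⁻ y in B, dens κ ν y ∂η)) (𝓝[>] 0)
        (𝓝 (((1 : ℝ≥0∞) + 0) * (C * ∫⁻ y in B, dens κ ν y ∂η))) := by
      refine ENNReal.Tendsto.mul_const ?_ (Or.inl (by simp))
      refine Tendsto.add tendsto_const_nhds ?_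
      have := (ENNReal.continuous_coe.tendsto 0).mono_left
        (nhdsWithin_le_nhds (s := Ioi (0 : ℝ≥0)))
      simpa using this
    have := ge_of_tendsto hlim2 (by
      filter_upwards [self_mem_nhdsWithin] with δ hδ using step δ hδ)
    simpa using this
  have hac : ν ≪ η := by
    intro E hE
    have h1 : ν E ≤ C * ∫⁻ y in toMeasurable η E, dens κ ν y ∂η :=
      (measure_mono (subset_toMeasurable η E)).trans
        (main _ (measurableSet_toMeasurable η E))
    rwa [Measure.restrict_eq_zero.2 (by rwa [measure_toMeasurable]),
      lintegral_zero_measure, mul_zero, le_zero_iff] at h1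
  have hsf : SigmaFinite ν := by
    refine Measure.sigmaFinite_of_countable (S := insert {y | dens κ ν y = ∞}
      (range fun p : ℕ × ℕ => spanningSets η p.1 ∩ {y | dens κ ν y < (p.2 : ℝ≥0∞) + 1}))
      ((countable_range _).insert _) ?_ ?_
    · rintro s (rfl | ⟨⟨k, m⟩, rfl⟩)
      · rw [hνtop]
        exact ENNReal.zero_lt_top
      · have h1 := hkey (spanningSets η k ∩ {y | dens κ ν y < (m : ℝ≥0∞) + 1})
          ((m : ℝ≥0∞) + 1)
          (ENNReal.add_ne_top.2 ⟨ENNReal.natCast_ne_top m, ENNReal.one_ne_top⟩)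
          (fun y hy => hy.2)
        refine lt_of_le_of_lt (h1.trans (mul_le_mul_right
          (measure_mono inter_subset_left) _)) ?_
        exact ENNReal.mul_lt_top
          (ENNReal.mul_lt_top hCt.lt_top
            (ENNReal.add_ne_top.2 ⟨ENNReal.natCast_ne_top m, ENNReal.one_ne_top⟩).lt_top)
          (measure_spanningSets_lt_top η k)
    · apply eq_univ_of_forall
      intro y
      rcases eq_or_ne (dens κ ν y) ∞ with htop | htop
      · exact mem_sUnion.2 ⟨_, mem_insert _ _, htop⟩
      · obtain ⟨m, hm⟩ := ENNReal.exists_nat_gt htop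
        obtain ⟨k, hk⟩ : ∃ k, y ∈ spanningSets η k := by
          have : y ∈ ⋃ k, spanningSets η k := by
            rw [iUnion_spanningSets]; exact mem_univ y
          exact mem_iUnion.1 this
        exact mem_sUnion.2 ⟨_, mem_insert_of_mem _ ⟨(k, m), rfl⟩,
          ⟨hk, lt_of_lt_of_le hm le_self_add⟩⟩
  haveI := hsf
  have hrn : ∀ᵐ y ∂η, ν.rnDeriv η y ≤ C * dens κ ν y := by
    refine ae_le_of_forall_setLIntegral_le_of_sigmaFinite
      (Measure.measurable_rnDeriv ν η) fun s hs hsfin => ?_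
    calc ∫⁻ x in s, ν.rnDeriv η x ∂η = ν s := Measure.setLIntegral_rnDeriv' hac hs
      _ ≤ C * ∫⁻ y in s, dens κ ν y ∂η := main s hs
      _ = ∫⁻ y in s, C * dens κ ν y ∂η := (lintegral_const_mul C hDmeas).symm
  exact ⟨main, hac, hrn⟩
end

section
/- Let X be a separable metric space, s > 0, and μ a finite Borel measure on X with finite s-energy I_s(μ) < ∞. Then there exist a Borel set B ⊆ X with μ(B) > 0 and a constant c' > 0 such that the restricted measure ν = μ|_B satisfies ν(B(x,r)) ≤ c'·r^s for all x ∈ X and all r > 0. -/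
open scoped ENNReal NNReal
open MeasureTheory Metric Set

/-- The `s`-energy of a measure. -/
noncomputable def energy {X : Type*} [PseudoMetricSpace X] [MeasurableSpace X] (s : ℝ)
    (μ : Measure X) : ℝ≥0∞ :=
  ∫⁻ x₁, ∫⁻ x₂, edist x₁ x₂ ^ (-s) ∂μ ∂μ

theorem restrict_frostman_of_energy_lt_top {X : Type*}
    [MetricSpace X] [TopologicalSpace.SeparableSpace X] [MeasurableSpace X] [BorelSpace X]
    (s : ℝ) (hs : 0 < s) (μ : Measure X) [IsFiniteMeasure μ]
    (hpos : 0 < μ Set.univ) (henergy : energy s μ < ⊤) :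
    ∃ B : Set X, MeasurableSet B ∧ 0 < μ B ∧
      ∃ c' : ℝ, 0 < c' ∧
        ∀ x : X, ∀ r : ℝ, 0 < r → μ.restrict B (ball x r) ≤ ENNReal.ofReal (c' * r ^ s) := by
  have : SecondCountableTopology X := UniformSpace.secondCountable_of_separable X
  set f : X → ℝ≥0∞ := fun x => ∫⁻ y, edist x y ^ (-s) ∂μ with hfdef
  have hfm : Measurable f := by
    exact Measurable.lintegral_prod_right'
      (f := fun p : X × X => edist p.1 p.2 ^ (-s)) (measurable_edist.pow_const _)
  have hint : ∫⁻ x, f x ∂μ < ⊤ := henergy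
  have hae : ∀ᵐ x ∂μ, f x < ⊤ := ae_lt_top hfm hint.ne
  -- find n with positive measure of {f ≤ n}
  obtain ⟨n, hn⟩ : ∃ n : ℕ, 0 < μ {x | f x ≤ n} := by
    by_contra h
    push_neg at h
    simp only [le_zero_iff] at h
    have h1 : μ {x | f x < ⊤} = 0 := by
      have hsub : {x | f x < ⊤} ⊆ ⋃ n : ℕ, {x | f x ≤ n} := by
        intro x hx
        obtain ⟨n, hn⟩ := ENNReal.exists_nat_gt hx.ne
        exact mem_iUnion.2 ⟨n, hn.le⟩
      exact measure_mono_null hsub (measure_iUnion_null h)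
    have h2 : μ {x | ¬ f x < ⊤} = 0 := hae
    have : μ Set.univ ≤ 0 := by
      calc μ Set.univ ≤ μ ({x | f x < ⊤} ∪ {x | ¬ f x < ⊤}) := by
            apply measure_mono; intro x _; by_cases hx : f x < ⊤
            · exact Or.inl hx
            · exact Or.inr hx
        _ ≤ μ {x | f x < ⊤} + μ {x | ¬ f x < ⊤} := measure_union_le _ _
        _ = 0 := by rw [h1, h2, add_zero]
    exact hpos.not_ge this
  refine ⟨{x | f x ≤ n}, hfm measurableSet_Iic, hn, ((n : ℝ) + 1) * 2 ^ s,
    by positivity, ?_⟩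
  intro x r hr
  rcases Set.eq_empty_or_nonempty ({x | f x ≤ n} ∩ ball x r) with hB | hB
  · rw [Measure.restrict_apply isOpen_ball.measurableSet, Set.inter_comm, hB]
    simp
  · obtain ⟨z, hzB, hzr⟩ := hB
    have hzB : f z ≤ n := hzB
    have hzr : dist z x < r := hzr
    set a : ℝ≥0∞ := ENNReal.ofReal (2 * r) with ha
    have ha0 : a ≠ 0 := by
      simp [ha, ENNReal.ofReal_eq_zero]; linarith
    have hat : a ≠ ⊤ := ENNReal.ofReal_ne_top
    have has0 : a ^ s ≠ 0 := by simp [ENNReal.rpow_eq_zero_iff, ha0, hat]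
    have hast : a ^ s ≠ ⊤ := by simp [ENNReal.rpow_eq_top_iff, ha0, hat]
    -- pointwise bound on the ball
    have hpt : ∀ y ∈ ball x r, a ^ (-s) ≤ edist z y ^ (-s) := by
      intro y hy
      have hdy : edist z y ≤ a := by
        calc edist z y ≤ edist z x + edist x y := edist_triangle _ _ _
          _ ≤ ENNReal.ofReal r + ENNReal.ofReal r := by
              gcongr
              · exact (edist_lt_ofReal.2 hzr).le
              · exact (edist_lt_ofReal.2 (by simpa [dist_comm] using hy)).le
          _ = a := by rw [ha, ← ENNReal.ofReal_add hr.le hr.le]; ring_nf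
      rw [ENNReal.rpow_neg, ENNReal.rpow_neg]
      exact ENNReal.inv_le_inv.2 (ENNReal.rpow_le_rpow hdy hs.le)
    have key : a ^ (-s) * μ (ball x r) ≤ (n : ℝ≥0∞) := by
      calc a ^ (-s) * μ (ball x r)
          = ∫⁻ _ in ball x r, a ^ (-s) ∂μ := (setLIntegral_const _ _).symm
        _ ≤ ∫⁻ y in ball x r, edist z y ^ (-s) ∂μ :=
            setLIntegral_mono ((measurable_edist_right.pow_const _)) hpt
        _ ≤ ∫⁻ y, edist z y ^ (-s) ∂μ := setLIntegral_le_lintegral _ _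
        _ ≤ n := hzB
    have key2 : μ (ball x r) ≤ a ^ s * n := by
      rw [ENNReal.rpow_neg, ENNReal.inv_mul_le_iff has0 hast] at key
      exact key
    have hfin : a ^ s * n = ENNReal.ofReal ((2 * r) ^ s * n) := by
      rw [ha, ENNReal.ofReal_rpow_of_pos (by linarith),
        ← ENNReal.ofReal_natCast n, ← ENNReal.ofReal_mul (by positivity)]
    calc μ.restrict {x | f x ≤ n} (ball x r) ≤ μ (ball x r) :=
          Measure.restrict_le_self _
      _ ≤ a ^ s * n := key2
      _ = ENNReal.ofReal ((2 * r) ^ s * n) := hfin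
      _ ≤ ENNReal.ofReal (((n : ℝ) + 1) * 2 ^ s * r ^ s) := by
          apply ENNReal.ofReal_le_ofReal
          rw [Real.mul_rpow (by norm_num) hr.le]
          have h2s : (0:ℝ) < 2 ^ s := Real.rpow_pos_of_pos (by norm_num) s
          have hrs : (0:ℝ) < r ^ s := Real.rpow_pos_of_pos hr s
          nlinarith [Nat.cast_nonneg (α := ℝ) n]
end

section
/- Let X be a separable metric space, s > 0, and suppose μ is a Borel measure on X with 0 < μ(X) < ∞ and a constant c > 0 such that μ(B(x,r)) ≤ c·r^s for all x ∈ X and r > 0. Then for every t with 0 ≤ t < s, the t-energy of μ is finite: I_t(μ) < ∞. -/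
open scoped ENNReal NNReal
open MeasureTheory Metric Set

private lemma pow_rpow_comm' (x : ℝ) (hx : 0 ≤ x) (n : ℕ) (y : ℝ) :
    (x ^ n) ^ y = (x ^ y) ^ n := by
  rw [← Real.rpow_natCast x n, ← Real.rpow_mul hx, mul_comm, Real.rpow_mul hx,
    Real.rpow_natCast]

theorem energy_lt_top_of_frostman {X : Type*}
    [MetricSpace X] [TopologicalSpace.SeparableSpace X] [MeasurableSpace X] [BorelSpace X]
    (s : ℝ) (hs : 0 < s) (μ : Measure X)
    (h0 : 0 < μ Set.univ) (hfin : μ Set.univ < ⊤)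
    (c : ℝ) (hc : 0 < c)
    (hball : ∀ x : X, ∀ r : ℝ, 0 < r → μ (ball x r) ≤ ENNReal.ofReal (c * r ^ s)) :
    ∀ t : ℝ, 0 ≤ t → t < s → energy t μ < ⊤ := by
  intro t ht hts
  -- singletons have measure zero
  have hhalf : ((1:ℝ)/2) ^ s < 1 :=
    Real.rpow_lt_one (by norm_num) (by norm_num) hs
  have hhalfnn : (0:ℝ) ≤ ((1:ℝ)/2) ^ s := Real.rpow_nonneg (by norm_num) s
  have hsing : ∀ x : X, μ {x} = 0 := by
    intro x
    have h1 : ∀ n : ℕ, μ {x} ≤ ENNReal.ofReal (c * (((1:ℝ)/2) ^ n) ^ s) := by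
      intro n
      refine le_trans (measure_mono ?_) (hball x _ (by positivity))
      intro y hy
      simp only [mem_singleton_iff] at hy
      subst hy
      have hp : (0:ℝ) < ((1:ℝ)/2)^n := by positivity
      simp [mem_ball, hp]
    have h2 : Filter.Tendsto (fun n : ℕ => ENNReal.ofReal (c * (((1:ℝ)/2) ^ n) ^ s))
        Filter.atTop (nhds 0) := by
      have h3 : Filter.Tendsto (fun n : ℕ => c * (((1:ℝ)/2) ^ n) ^ s)
          Filter.atTop (nhds 0) := by
        have h4 : Filter.Tendsto (fun n : ℕ => (((1:ℝ)/2) ^ s) ^ n)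
            Filter.atTop (nhds 0) :=
          tendsto_pow_atTop_nhds_zero_of_lt_one hhalfnn hhalf
        have := h4.const_mul c
        rw [mul_zero] at this
        refine this.congr fun n => ?_
        rw [pow_rpow_comm' _ (by norm_num) n s]
      have := (ENNReal.continuous_ofReal.tendsto 0).comp h3
      simpa [Function.comp_def] using this
    have := ge_of_tendsto' h2 h1
    simpa using this
  -- measurability
  have hfm : ∀ x : X, Measurable (fun y : X => edist x y ^ (-t)) := by
    intro x
    exact ((continuous_const.edist continuous_id).measurable).pow_const (-t)
  -- the geometric ratio
  set ρ : ℝ := (2:ℝ) ^ t * ((1:ℝ)/2) ^ s with hρdef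
  have h2t : (0:ℝ) < (2:ℝ) ^ t := Real.rpow_pos_of_pos (by norm_num) t
  have hρ0 : (0:ℝ) ≤ ρ := by positivity
  have hρ1 : ρ < 1 := by
    have h2s : (2:ℝ) ^ t < (2:ℝ) ^ s :=
      Real.rpow_lt_rpow_of_exponent_lt (by norm_num) hts
    have hinv : ((1:ℝ)/2) ^ s = ((2:ℝ) ^ s)⁻¹ := by
      rw [one_div, Real.inv_rpow (by norm_num : (0:ℝ) ≤ 2)]
    rw [hρdef, hinv, ← div_eq_mul_inv, div_lt_one (Real.rpow_pos_of_pos (by norm_num) s)]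
    exact h2s
  set C : ℝ := (2:ℝ) ^ t * c with hCdef
  have hC0 : (0:ℝ) ≤ C := by positivity
  -- the tsum bound
  set T : ℝ≥0∞ := ∑' n : ℕ, ENNReal.ofReal (C * ρ ^ n) with hTdef
  have hTlt : T < ⊤ := by
    have heq : ∀ n : ℕ, ENNReal.ofReal (C * ρ ^ n)
        = ENNReal.ofReal C * (ENNReal.ofReal ρ) ^ n := by
      intro n
      rw [ENNReal.ofReal_mul hC0, ENNReal.ofReal_pow hρ0]
    rw [hTdef]
    simp_rw [heq]
    rw [ENNReal.tsum_mul_left, ENNReal.tsum_geometric]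
    refine ENNReal.mul_lt_top ENNReal.ofReal_lt_top ?_
    refine ENNReal.inv_lt_top.mpr ?_
    have : ENNReal.ofReal ρ < 1 := by
      rw [← ENNReal.ofReal_one]
      exact ENNReal.ofReal_lt_ofReal_iff_of_nonneg hρ0 |>.mpr hρ1
    exact tsub_pos_of_lt this
  -- key pointwise bound for the inner integral
  have key : ∀ x : X, (∫⁻ y, edist x y ^ (-t) ∂μ) ≤ μ Set.univ + T := by
    intro x
    have hB : MeasurableSet (ball x 1) := measurableSet_ball
    rw [← lintegral_add_compl (fun y => edist x y ^ (-t)) hB]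
    have houter : (∫⁻ y in (ball x 1)ᶜ, edist x y ^ (-t) ∂μ) ≤ μ Set.univ := by
      calc (∫⁻ y in (ball x 1)ᶜ, edist x y ^ (-t) ∂μ)
          ≤ ∫⁻ _ in (ball x 1)ᶜ, 1 ∂μ := by
            refine setLIntegral_mono' hB.compl fun y hy => ?_
            have h1 : (1:ℝ) ≤ dist y x := by
              simpa [mem_ball, not_lt] using hy
            have h1e : (1:ℝ≥0∞) ≤ edist x y := by
              rw [edist_comm, edist_dist]
              exact le_trans (by simp) (ENNReal.ofReal_le_ofReal h1)
            rw [ENNReal.rpow_neg]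
            refine ENNReal.inv_le_one.mpr ?_
            calc (1:ℝ≥0∞) = 1 ^ t := (ENNReal.one_rpow t).symm
              _ ≤ edist x y ^ t := ENNReal.rpow_le_rpow h1e ht
        _ = μ ((ball x 1)ᶜ) := by rw [setLIntegral_const, one_mul]
        _ ≤ μ Set.univ := measure_mono (subset_univ _)
    have hinner : (∫⁻ y in ball x 1, edist x y ^ (-t) ∂μ) ≤ T := by
      set A : ℕ → Set X := fun n => ball x (((1:ℝ)/2) ^ n) \ ball x (((1:ℝ)/2) ^ (n+1))
        with hAdef
      have hsub : ball x 1 ⊆ {x} ∪ ⋃ n, A n := by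
        intro y hy
        rcases eq_or_ne y x with rfl | hne
        · exact Or.inl rfl
        · have hd0 : 0 < dist y x := dist_pos.mpr hne
          have hd1 : dist y x < 1 := mem_ball.mp hy
          have hex : ∃ m : ℕ, ((1:ℝ)/2) ^ (m+1) ≤ dist y x := by
            obtain ⟨m, hm⟩ := exists_pow_lt_of_lt_one hd0 (by norm_num : (1:ℝ)/2 < 1)
            exact ⟨m, le_of_lt (lt_of_le_of_lt
              (pow_le_pow_of_le_one (by norm_num) (by norm_num) (Nat.le_succ m)) hm)⟩
          classical
          have hge : ((1:ℝ)/2) ^ (Nat.find hex + 1) ≤ dist y x := Nat.find_spec hex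
          have hlt : dist y x < ((1:ℝ)/2) ^ (Nat.find hex) := by
            cases' h : Nat.find hex with k
            · simpa using hd1
            · have hm := Nat.find_min hex (show k < Nat.find hex by omega)
              exact not_le.mp hm
          refine Or.inr (mem_iUnion.mpr ⟨Nat.find hex, ?_⟩)
          exact ⟨mem_ball.mpr hlt, fun h => absurd (mem_ball.mp h) (not_lt.mpr hge)⟩
      calc (∫⁻ y in ball x 1, edist x y ^ (-t) ∂μ)
          ≤ ∫⁻ y in {x} ∪ ⋃ n, A n, edist x y ^ (-t) ∂μ := lintegral_mono_set hsub
        _ ≤ (∫⁻ y in {x}, edist x y ^ (-t) ∂μ)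
            + ∫⁻ y in ⋃ n, A n, edist x y ^ (-t) ∂μ := lintegral_union_le _ _ _
        _ = ∫⁻ y in ⋃ n, A n, edist x y ^ (-t) ∂μ := by
            rw [lintegral_singleton, hsing x, mul_zero, zero_add]
        _ ≤ ∑' n, ∫⁻ y in A n, edist x y ^ (-t) ∂μ := lintegral_iUnion_le _ _
        _ ≤ T := by
            rw [hTdef]
            refine ENNReal.tsum_le_tsum fun n => ?_
            have hrn : (0:ℝ) < ((1:ℝ)/2) ^ (n+1) := by positivity
            have hbound : ∀ y ∈ A n,
                edist x y ^ (-t) ≤ ENNReal.ofReal ((((1:ℝ)/2) ^ (n+1)) ^ (-t)) := by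
              intro y hy
              have hge : ((1:ℝ)/2) ^ (n+1) ≤ dist y x := by
                have := hy.2
                simpa [mem_ball, not_lt] using this
              have hee : ENNReal.ofReal (((1:ℝ)/2) ^ (n+1)) ≤ edist x y := by
                rw [edist_comm, edist_dist]
                exact ENNReal.ofReal_le_ofReal hge
              calc edist x y ^ (-t)
                  ≤ (ENNReal.ofReal (((1:ℝ)/2) ^ (n+1))) ^ (-t) := by
                    rw [ENNReal.rpow_neg, ENNReal.rpow_neg]
                    exact ENNReal.inv_le_inv' (ENNReal.rpow_le_rpow hee ht)
                _ = ENNReal.ofReal ((((1:ℝ)/2) ^ (n+1)) ^ (-t)) :=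
                    ENNReal.ofReal_rpow_of_pos hrn
            have hAm : MeasurableSet (A n) :=
              measurableSet_ball.diff measurableSet_ball
            calc (∫⁻ y in A n, edist x y ^ (-t) ∂μ)
                ≤ ∫⁻ _ in A n, ENNReal.ofReal ((((1:ℝ)/2) ^ (n+1)) ^ (-t)) ∂μ :=
                  setLIntegral_mono' hAm hbound
              _ = ENNReal.ofReal ((((1:ℝ)/2) ^ (n+1)) ^ (-t)) * μ (A n) :=
                  setLIntegral_const _ _
              _ ≤ ENNReal.ofReal ((((1:ℝ)/2) ^ (n+1)) ^ (-t))
                  * ENNReal.ofReal (c * (((1:ℝ)/2) ^ n) ^ s) := by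
                  refine mul_le_mul_right ?_ _
                  exact le_trans (measure_mono diff_subset) (hball x _ (by positivity))
              _ = ENNReal.ofReal (C * ρ ^ n) := by
                  rw [← ENNReal.ofReal_mul (Real.rpow_nonneg hrn.le _)]
                  congr 1
                  rw [pow_rpow_comm' _ (by norm_num) (n+1) (-t),
                    pow_rpow_comm' _ (by norm_num) n s]
                  have h12 : ((1:ℝ)/2) ^ (-t) = (2:ℝ) ^ t := by
                    rw [one_div, Real.inv_rpow (by norm_num : (0:ℝ) ≤ 2),
                      Real.rpow_neg (by norm_num : (0:ℝ) ≤ 2), inv_inv]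
                  rw [h12, hCdef, hρdef]
                  ring
    calc (∫⁻ y in ball x 1, edist x y ^ (-t) ∂μ)
          + ∫⁻ y in (ball x 1)ᶜ, edist x y ^ (-t) ∂μ
        ≤ T + μ Set.univ := add_le_add hinner houter
      _ = μ Set.univ + T := add_comm _ _
  -- conclude
  calc energy t μ ≤ ∫⁻ _, (μ Set.univ + T) ∂μ := lintegral_mono key
    _ = (μ Set.univ + T) * μ Set.univ := lintegral_const _
    _ < ⊤ := ENNReal.mul_lt_top (ENNReal.add_lt_top.mpr ⟨hfin, hTlt⟩) hfin
end

section
/- Let Y be a separable metric space, κ > 0, and let ν, η be Borel measures on Y with η upper regular by open sets and D^κη(y) > 0 for all y ∈ Y. Suppose ν(Y) > 0 and ∫_Y D^κν dν < ∞ (so in particular D^κν < ∞ ν-almost everywhere). Then η(S) > 0 for every Borel set S ⊆ Y with ν(Y \ S) = 0; in particular, if ν is the pushforward of a positive finite measure under a map with image contained in a set E, then η(E) > 0. -/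
open scoped ENNReal NNReal
open MeasureTheory Metric Filter Set Topology

universe u

section Aux

variable {Y : Type*} [MetricSpace Y] [MeasurableSpace Y]

lemma aux_ball_iUnion (y : Y) (r : ℝ) :
    ball y r = ⋃ n : ℕ, ball y (r - 1 / (n + 1)) := by
  ext z
  simp only [mem_ball, mem_iUnion]
  constructor
  · intro hz
    obtain ⟨n, hn⟩ := exists_nat_one_div_lt (sub_pos.2 hz)
    exact ⟨n, by linarith⟩
  · rintro ⟨n, hn⟩
    have : (0 : ℝ) < 1 / (n + 1) := by positivity
    linarith

lemma aux_ball_mono (y : Y) (r : ℝ) :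
    Monotone fun n : ℕ => ball y (r - 1 / (n + 1)) := by
  intro m k hmk
  apply ball_subset_ball
  have h1 : (m : ℝ) + 1 ≤ (k : ℝ) + 1 := by
    have := (Nat.cast_le (α := ℝ)).2 hmk; linarith
  have h2 : (1 : ℝ) / (k + 1) ≤ 1 / (m + 1) :=
    one_div_le_one_div_of_le (by positivity) h1
  linarith

lemma aux_tendsto_measure_ball (ν : Measure Y) (y : Y) (r : ℝ) :
    Tendsto (fun n : ℕ => ν (ball y (r - 1 / (n + 1)))) atTop (𝓝 (ν (ball y r))) := by
  have h1 : ν (ball y r) = ⨆ n : ℕ, ν (ball y (r - 1 / (n + 1))) := by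
    rw [aux_ball_iUnion y r, Directed.measure_iUnion (aux_ball_mono y r).directed_le]
  rw [h1]
  exact tendsto_atTop_iSup fun m k hmk => measure_mono (aux_ball_mono y r hmk)

lemma aux_measurable_measure_ball [OpensMeasurableSpace Y] (ν : Measure Y) (r : ℝ) :
    Measurable fun y => ν (ball y r) := by
  have hls : LowerSemicontinuous fun y => ν (ball y r) := by
    intro y a ha
    dsimp only at ha ⊢
    rw [aux_ball_iUnion y r, Directed.measure_iUnion (aux_ball_mono y r).directed_le] at ha
    obtain ⟨n, hn⟩ := lt_iSup_iff.1 ha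
    filter_upwards [ball_mem_nhds y (show (0 : ℝ) < 1 / (n + 1) by positivity)] with y' hy'
    refine lt_of_lt_of_le hn (measure_mono fun z hz => ?_)
    rw [mem_ball] at *
    have h3 := dist_triangle z y y'
    rw [dist_comm y' y] at hy'
    linarith
  exact hls.measurable

lemma aux_ratInf (κ : ℝ) (hκ : 0 < κ) (ν : Measure Y) (y : Y) {ε : ℝ} (hε : 0 < ε) :
    (⨅ (r : ℝ) (_ : r ∈ Ioo (0 : ℝ) ε), ν (ball y r) / ENNReal.ofReal (r ^ κ)) =
      ⨅ (q : ℚ) (_ : (q : ℝ) ∈ Ioo (0 : ℝ) ε),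
        ν (ball y (q : ℝ)) / ENNReal.ofReal ((q : ℝ) ^ κ) := by
  apply le_antisymm
  · exact le_iInf₂ fun q hq => iInf₂_le (q : ℝ) hq
  · refine le_iInf₂ fun r hr => ?_
    by_cases htop : ν (ball y r) = ∞
    · rw [htop, ENNReal.top_div_of_ne_top ENNReal.ofReal_ne_top]
      exact le_top
    -- choose rationals increasing to r
    have hq : ∀ m : ℕ, ∃ q : ℚ, max 0 (r - 1 / (m + 1)) < (q : ℝ) ∧ (q : ℝ) < r := by
      intro m
      apply exists_rat_btwn
      apply max_lt hr.1
      have : (0 : ℝ) < 1 / (m + 1) := by positivity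
      linarith
    choose q hq1 hq2 using hq
    have hq0 : ∀ m, 0 < (q m : ℝ) := fun m => lt_of_le_of_lt (le_max_left _ _) (hq1 m)
    have hqmem : ∀ m, (q m : ℝ) ∈ Ioo (0 : ℝ) ε := fun m => ⟨hq0 m, (hq2 m).trans hr.2⟩
    have htend : Tendsto (fun m => (q m : ℝ)) atTop (𝓝 r) := by
      have hlo : Tendsto (fun m : ℕ => r - 1 / (m + 1 : ℝ)) atTop (𝓝 r) := by
        have hcn : Tendsto (fun _ : ℕ => r) atTop (𝓝 r) := tendsto_const_nhds
        have := hcn.sub tendsto_one_div_add_atTop_nhds_zero_nat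
        simpa using this
      refine tendsto_of_tendsto_of_tendsto_of_le_of_le hlo tendsto_const_nhds
        (fun m => le_of_lt (lt_of_le_of_lt (le_max_right _ _) (hq1 m))) fun m => (hq2 m).le
    have hmeas : Tendsto (fun m => ν (ball y (q m : ℝ))) atTop (𝓝 (ν (ball y r))) := by
      refine tendsto_of_tendsto_of_tendsto_of_le_of_le (aux_tendsto_measure_ball ν y r)
        tendsto_const_nhds (fun m => measure_mono (ball_subset_ball ?_))
        fun m => measure_mono (ball_subset_ball (hq2 m).le)
      exact le_of_lt (lt_of_le_of_lt (le_max_right _ _) (hq1 m))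
    have hden : Tendsto (fun m => ENNReal.ofReal ((q m : ℝ) ^ κ)) atTop
        (𝓝 (ENNReal.ofReal (r ^ κ))) := by
      apply (ENNReal.continuous_ofReal.tendsto _).comp
      exact ((Real.continuousAt_rpow_const r κ (Or.inl hr.1.ne')).tendsto).comp htend
    have hdiv : Tendsto (fun m => ν (ball y (q m : ℝ)) / ENNReal.ofReal ((q m : ℝ) ^ κ)) atTop
        (𝓝 (ν (ball y r) / ENNReal.ofReal (r ^ κ))) := by
      refine ENNReal.Tendsto.div hmeas ?_ hden (Or.inl ENNReal.ofReal_ne_top)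
      exact Or.inr (ENNReal.ofReal_pos.2 (Real.rpow_pos_of_pos hr.1 κ)).ne'
    exact ge_of_tendsto hdiv (Eventually.of_forall fun m => iInf₂_le (q m) (hqmem m))

lemma aux_dens_eq (κ : ℝ) (hκ : 0 < κ) (ν : Measure Y) (y : Y) :
    dens κ ν y = ⨆ n : ℕ, ⨅ (q : ℚ) (_ : (q : ℝ) ∈ Ioo (0 : ℝ) (1 / (n + 1))),
      ν (ball y (q : ℝ)) / ENNReal.ofReal ((q : ℝ) ^ κ) := by
  rw [dens, (nhdsGT_basis (0 : ℝ)).liminf_eq_iSup_iInf]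
  have h1 : ∀ n : ℕ, (0 : ℝ) < 1 / (n + 1) := fun n => by positivity
  apply le_antisymm
  · refine iSup₂_le fun ε hε => ?_
    obtain ⟨n, hn⟩ := exists_nat_one_div_lt hε
    refine le_trans ?_ (le_iSup _ n)
    rw [← aux_ratInf κ hκ ν y (h1 n)]
    exact le_iInf₂ fun r hr => iInf₂_le r ⟨hr.1, hr.2.trans hn⟩
  · refine iSup_le fun n => ?_
    rw [← aux_ratInf κ hκ ν y (h1 n)]
    exact le_iSup₂_of_le (1 / (n + 1 : ℝ)) (h1 n) le_rfl

lemma aux_measurable_dens [OpensMeasurableSpace Y] (κ : ℝ) (hκ : 0 < κ) (ν : Measure Y) :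
    Measurable (dens κ ν) := by
  have h : dens κ ν = fun y => ⨆ n : ℕ, ⨅ (q : ℚ) (_ : (q : ℝ) ∈ Ioo (0 : ℝ) (1 / (n + 1))),
      ν (ball y (q : ℝ)) / ENNReal.ofReal ((q : ℝ) ^ κ) := funext fun y => aux_dens_eq κ hκ ν y
  rw [h]
  refine Measurable.iSup fun n => Measurable.iInf fun q => Measurable.iInf fun _ => ?_
  exact (aux_measurable_measure_ball ν (q : ℝ)).div measurable_const

end Aux

theorem pos_measure_of_density_conull {Y : Type*}
    [MetricSpace Y] [TopologicalSpace.SeparableSpace Y] [MeasurableSpace Y] [BorelSpace Y]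
    (κ : ℝ) (hκ : 0 < κ) (ν η : Measure Y) (hreg : UpperRegular η)
    (hdη : ∀ y : Y, 0 < dens κ η y)
    (hν : 0 < ν Set.univ) (hint : ∫⁻ y, dens κ ν y ∂ν < ⊤) :
    (∀ S : Set Y, MeasurableSet S → ν Sᶜ = 0 → 0 < η S) ∧
      ∀ (Z : Type u) [MeasurableSpace Z] (μ₀ : Measure Z) (f : Z → Y),
        Measurable f → 0 < μ₀ Set.univ → μ₀ Set.univ < ⊤ → ν = Measure.map f μ₀ →
          ∀ E : Set Y, Set.range f ⊆ E → 0 < η E := by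
  classical
  have hgmeas : Measurable (dens κ ν) := aux_measurable_dens κ hκ ν
  have hginf : ν {y | dens κ ν y = ∞} = 0 := by
    have h := ae_lt_top hgmeas hint.ne
    rw [ae_iff] at h
    convert h using 2
    ext y
    simp [lt_top_iff_ne_top]
  set A : ℕ → ℕ → Set Y := fun M n =>
    {y | dens κ ν y < M ∧ ((n : ℝ≥0∞))⁻¹ < dens κ η y} with hAdef
  have hAex : ∃ M n : ℕ, 0 < ν (A M n) := by
    by_contra h
    push_neg at h
    have hcover : (univ : Set Y) ⊆ {y | dens κ ν y = ∞} ∪ ⋃ p : ℕ × ℕ, A p.1 p.2 := by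
      intro y _
      by_cases hy : dens κ ν y = ∞
      · exact Or.inl hy
      · refine Or.inr (mem_iUnion.2 ?_)
        obtain ⟨M, hM⟩ := ENNReal.exists_nat_gt hy
        obtain ⟨n, hn⟩ := ENNReal.exists_inv_nat_lt (hdη y).ne'
        exact ⟨(M, n), hM, hn⟩
    have h2 : ν (⋃ p : ℕ × ℕ, A p.1 p.2) = 0 := by
      refine le_antisymm ((measure_iUnion_le _).trans ?_) zero_le
      have : ∀ p : ℕ × ℕ, ν (A p.1 p.2) = 0 :=
        fun p => le_antisymm (h p.1 p.2) zero_le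
      simp [this]
    have h3 : ν univ = 0 := by
      refine le_antisymm ?_ zero_le
      calc ν univ ≤ ν ({y | dens κ ν y = ∞} ∪ ⋃ p : ℕ × ℕ, A p.1 p.2) := measure_mono hcover
        _ ≤ ν {y | dens κ ν y = ∞} + ν (⋃ p : ℕ × ℕ, A p.1 p.2) := measure_union_le _ _
        _ = 0 := by rw [hginf, h2, add_zero]
    exact hν.ne' h3
  obtain ⟨M, n, hA⟩ := hAex
  set C : ℝ≥0∞ := (M : ℝ≥0∞) * ENNReal.ofReal ((5 : ℝ) ^ κ) * n with hC
  have hCne : C ≠ ∞ :=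
    ENNReal.mul_ne_top (ENNReal.mul_ne_top (ENNReal.natCast_ne_top M) ENNReal.ofReal_ne_top)
      (ENNReal.natCast_ne_top n)
  have key : ∀ U : Set Y, IsOpen U → ν Uᶜ = 0 → ν (A M n) ≤ C * η U := by
    intro U hUo hUc
    set B := A M n ∩ U with hB
    have hBA : ν (A M n) ≤ ν B := by
      calc ν (A M n) ≤ ν (B ∪ Uᶜ) := by
            refine measure_mono fun y hy => ?_
            by_cases h : y ∈ U
            · exact Or.inl ⟨hy, h⟩
            · exact Or.inr h
        _ ≤ ν B + ν Uᶜ := measure_union_le _ _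
        _ = ν B := by rw [hUc, add_zero]
    set t : Set (Y × ℝ) := {p | p.1 ∈ B ∧ 0 < p.2 ∧ p.2 ≤ 1 ∧ ball p.1 (5 * p.2) ⊆ U ∧
      ν (ball p.1 (5 * p.2)) ≤ M * ENNReal.ofReal ((5 * p.2) ^ κ) ∧
      ENNReal.ofReal (p.2 ^ κ) ≤ n * η (ball p.1 p.2)} with ht
    have hn0 : ∀ y ∈ B, (n : ℝ≥0∞) ≠ 0 := by
      intro y hy
      rintro hn
      have := hy.1.2
      rw [hn] at this
      simp at this
    have hex : ∀ y ∈ B, ∃ ρ : ℝ, (y, ρ) ∈ t := by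
      intro y hy
      obtain ⟨⟨hyν, hyη⟩, hyU⟩ := hy
      have f1 : ∃ᶠ r in 𝓝[>] (0 : ℝ),
          ν (ball y r) / ENNReal.ofReal (r ^ κ) < M := frequently_lt_of_liminf_lt (by isBoundedDefault) hyν
      have e1 : ∀ᶠ r in 𝓝[>] (0 : ℝ),
          ((n : ℝ≥0∞))⁻¹ < η (ball y r) / ENNReal.ofReal (r ^ κ) := eventually_lt_of_lt_liminf hyη
      obtain ⟨δ', hδ'pos, hδ'⟩ := (nhdsGT_basis (0 : ℝ)).eventually_iff.1 e1
      obtain ⟨δ, hδ0, hδU⟩ := Metric.isOpen_iff.1 hUo y hyU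
      have e2 : Ioo (0 : ℝ) (min δ (min 5 (5 * δ'))) ∈ 𝓝[>] (0 : ℝ) := by
        apply Ioo_mem_nhdsGT_of_mem
        constructor
        · exact le_rfl
        · simp only [lt_min_iff]
          exact ⟨hδ0, by norm_num, by linarith⟩
      obtain ⟨r, hrM, hr⟩ := (f1.and_eventually e2).exists
      obtain ⟨hr0, hrlt⟩ := hr
      simp only [lt_min_iff] at hrlt
      obtain ⟨hrδ, hr5, hrδ'⟩ := hrlt
      refine ⟨r / 5, ⟨⟨hyν, hyη⟩, hyU⟩, by linarith, by linarith, ?_, ?_, ?_⟩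
      · have h5 : 5 * (r / 5) = r := by ring
        rw [h5]
        exact (ball_subset_ball hrδ.le).trans hδU
      · have h5 : 5 * (r / 5) = r := by ring
        rw [h5]
        have hb0 : ENNReal.ofReal (r ^ κ) ≠ 0 :=
          (ENNReal.ofReal_pos.2 (Real.rpow_pos_of_pos hr0 κ)).ne'
        exact ((ENNReal.div_lt_iff (Or.inl hb0) (Or.inl ENNReal.ofReal_ne_top)).1 hrM).le
      · have hρmem : r / 5 ∈ Ioo (0 : ℝ) δ' := ⟨by linarith, by linarith⟩
        have hlt := hδ' hρmem
        have hb0 : ENNReal.ofReal ((r / 5) ^ κ) ≠ 0 :=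
          (ENNReal.ofReal_pos.2 (Real.rpow_pos_of_pos (by linarith) κ)).ne'
        have hmul : ((n : ℝ≥0∞))⁻¹ * ENNReal.ofReal ((r / 5) ^ κ) < η (ball y (r / 5)) :=
          (ENNReal.lt_div_iff_mul_lt (Or.inl hb0) (Or.inl ENNReal.ofReal_ne_top)).1 hlt
        have hnn : (n : ℝ≥0∞) * (n : ℝ≥0∞)⁻¹ = 1 :=
          ENNReal.mul_inv_cancel (hn0 y ⟨⟨hyν, hyη⟩, hyU⟩) (ENNReal.natCast_ne_top n)
        calc ENNReal.ofReal ((r / 5) ^ κ)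
            = (n : ℝ≥0∞) * ((n : ℝ≥0∞)⁻¹ * ENNReal.ofReal ((r / 5) ^ κ)) := by
              rw [← mul_assoc, hnn, one_mul]
          _ ≤ (n : ℝ≥0∞) * η (ball y (r / 5)) := mul_le_mul_right hmul.le _
    obtain ⟨u, hut, hud, hcov⟩ :=
      Vitali.exists_disjoint_subfamily_covering_enlargement_closedBall t Prod.fst Prod.snd 1
        (fun a ha => ha.2.2.1) 4 (by norm_num)
    have hud' : u.PairwiseDisjoint fun p : Y × ℝ => ball p.1 p.2 := by
      intro p hp q hq hpq
      exact (hud hp hq hpq).mono ball_subset_closedBall ball_subset_closedBall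
    have hcount : u.Countable := by
      refine hud'.countable_of_isOpen (fun p _ => isOpen_ball) fun p hp => ?_
      exact nonempty_ball.2 (hut hp).2.1
    have hBcov : B ⊆ ⋃ p ∈ u, ball p.1 (5 * p.2) := by
      intro y hy
      obtain ⟨ρy, hρy⟩ := hex y hy
      obtain ⟨b, hbu, hbsub⟩ := hcov (y, ρy) hρy
      have hb := hut hbu
      refine mem_biUnion hbu ?_
      have hy' : y ∈ closedBall y ρy := mem_closedBall_self hρy.2.1.le
      have h4 := mem_closedBall.1 (hbsub hy')
      have hbpos : 0 < b.2 := hb.2.1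
      exact mem_ball.2 (lt_of_le_of_lt h4 (by linarith))
    calc ν (A M n) ≤ ν B := hBA
      _ ≤ ν (⋃ p ∈ u, ball p.1 (5 * p.2)) := measure_mono hBcov
      _ ≤ ∑' p : u, ν (ball (p : Y × ℝ).1 (5 * (p : Y × ℝ).2)) := measure_biUnion_le ν hcount _
      _ ≤ ∑' p : u, C * η (ball (p : Y × ℝ).1 (p : Y × ℝ).2) := by
          refine ENNReal.tsum_le_tsum fun p => ?_
          have hp := hut p.2
          calc ν (ball (p : Y × ℝ).1 (5 * (p : Y × ℝ).2))
              ≤ M * ENNReal.ofReal ((5 * (p : Y × ℝ).2) ^ κ) := hp.2.2.2.2.1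
            _ = (M : ℝ≥0∞) * (ENNReal.ofReal ((5 : ℝ) ^ κ) *
                ENNReal.ofReal ((p : Y × ℝ).2 ^ κ)) := by
                rw [Real.mul_rpow (by norm_num) hp.2.1.le, ENNReal.ofReal_mul (by positivity)]
            _ ≤ (M : ℝ≥0∞) * (ENNReal.ofReal ((5 : ℝ) ^ κ) *
                ((n : ℝ≥0∞) * η (ball (p : Y × ℝ).1 (p : Y × ℝ).2))) := by
                gcongr
                exact hp.2.2.2.2.2
            _ = C * η (ball (p : Y × ℝ).1 (p : Y × ℝ).2) := by rw [hC]; ring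
      _ = C * ∑' p : u, η (ball (p : Y × ℝ).1 (p : Y × ℝ).2) := ENNReal.tsum_mul_left
      _ = C * η (⋃ p ∈ u, ball p.1 p.2) := by
          rw [measure_biUnion hcount hud' fun p _ => measurableSet_ball]
      _ ≤ C * η U := by
          refine mul_le_mul_right (measure_mono (iUnion₂_subset fun p hp => ?_)) _
          have hppos : 0 < p.2 := (hut hp).2.1
          exact (ball_subset_ball (by linarith)).trans (hut hp).2.2.2.1
  have hkey2 : ∀ U : Set Y, IsOpen U → ν Uᶜ = 0 → ν (A M n) / C ≤ η U := by
    intro U hU h0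
    exact ENNReal.div_le_of_le_mul ((key U hU h0).trans (mul_comm C (η U)).le)
  set c := ν (A M n) / C with hc
  have hcpos : 0 < c := ENNReal.div_pos hA.ne' hCne
  constructor
  · intro S _ hS0
    refine hcpos.trans_le ?_
    rw [hreg S]
    refine le_iInf fun U => le_iInf fun hU => le_iInf fun hSU => ?_
    refine hkey2 U hU (le_antisymm ?_ zero_le)
    calc ν Uᶜ ≤ ν Sᶜ := measure_mono (compl_subset_compl.2 hSU)
      _ = 0 := hS0
  · intro Z _ μ₀ f hf _ _ hmap E hE
    have hrange : c ≤ η (range f) := by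
      rw [hreg (range f)]
      refine le_iInf fun U => le_iInf fun hU => le_iInf fun hSU => ?_
      refine hkey2 U hU ?_
      rw [hmap, Measure.map_apply hf hU.measurableSet.compl]
      have hpre : f ⁻¹' Uᶜ = ∅ := by
        rw [eq_empty_iff_forall_notMem]
        intro z hz
        exact hz (hSU (mem_range_self z))
      rw [hpre, measure_empty]
    exact hcpos.trans_le (hrange.trans (measure_mono hE))
end
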